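/- arXiv:1308.3975 — 7 statements merged into one kernel-verified Lean document; each statement's English description precedes it below -/
import Mathlib

section
/- For every real exponent p > 1, every β ≥ 1, and all nonnegative reals a, b, one has |a-b|^{p-2}(a-b)(a^β - b^β) ≥ (β p^p / (β+p-1)^p) · |a^{(β+p-1)/p} - b^{(β+p-1)/p}|^p. -/
open Real

/-- Pointwise Young step. -/
lemma young_step (p β l x : ℝ) (hp : 1 < p) (hβ : 1 ≤ β) (hl : 0 < l) (hx : 0 ≤ x) :
    x ^ ((β - 1) / p) ≤ l * x ^ (β - 1) / p + l ^ (-(1 / (p - 1))) * ((p - 1) / p) := by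
  have hp0 : (0:ℝ) < p := lt_trans one_pos hp
  have hp1 : (0:ℝ) < p - 1 := by linarith
  have hpq : p.HolderConjugate (p / (p - 1)) := Real.HolderConjugate.conjExponent hp
  have hA : (0:ℝ) ≤ l ^ (1/p) * x ^ ((β-1)/p) :=
    mul_nonneg (Real.rpow_nonneg hl.le _) (Real.rpow_nonneg hx _)
  have hB : (0:ℝ) ≤ l ^ (-(1/p)) := Real.rpow_nonneg hl.le _
  have young := Real.young_inequality_of_nonneg hA hB hpq
  have e1 : (l ^ (1/p) * x ^ ((β-1)/p)) ^ p = l * x ^ (β - 1) := by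
    rw [Real.mul_rpow (Real.rpow_nonneg hl.le _) (Real.rpow_nonneg hx _),
      ← Real.rpow_mul hl.le, ← Real.rpow_mul hx,
      one_div_mul_cancel hp0.ne', div_mul_cancel₀ _ hp0.ne', Real.rpow_one]
  have e2 : (l ^ (-(1/p))) ^ (p / (p-1)) = l ^ (-(1 / (p - 1))) := by
    rw [← Real.rpow_mul hl.le]
    congr 1
    field_simp
  have e3 : l ^ (1/p) * x ^ ((β-1)/p) * l ^ (-(1/p)) = x ^ ((β-1)/p) := by
    rw [mul_comm (l ^ (1/p)) _, mul_assoc, ← Real.rpow_add hl]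
    norm_num
  have e4 : (1:ℝ) / (p / (p-1)) = (p-1)/p := by field_simp
  rw [e1, e2, e3] at young
  calc x ^ ((β - 1) / p) ≤ l * x ^ (β-1) / p + l ^ (-(1/(p-1))) / (p / (p-1)) := young
    _ = l * x ^ (β - 1) / p + l ^ (-(1 / (p - 1))) * ((p - 1) / p) := by
        rw [div_eq_mul_one_div (l ^ (-(1/(p-1)))), e4]

/-- Integrated (via monotonicity) Young step. -/
lemma mono_step (p β l a b : ℝ) (hp : 1 < p) (hβ : 1 ≤ β) (hl : 0 < l)
    (hb : 0 ≤ b) (hab : b ≤ a) :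
    (a ^ ((β+p-1)/p) - b ^ ((β+p-1)/p)) / ((β+p-1)/p) ≤
      l * ((a ^ β - b ^ β) / β) / p + l ^ (-(1 / (p - 1))) * ((p - 1) / p) * (a - b) := by
  have hp0 : (0:ℝ) < p := lt_trans one_pos hp
  have hβ0 : (0:ℝ) < β := lt_of_lt_of_le one_pos hβ
  set γ : ℝ := (β + p - 1) / p with hγdef
  have hγ1 : 1 ≤ γ := by
    rw [hγdef, le_div_iff₀ hp0]; linarith
  have hγ0 : (0:ℝ) < γ := lt_of_lt_of_le one_pos hγ1
  have hγm1 : γ - 1 = (β - 1) / p := by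
    rw [hγdef]; field_simp; ring
  set c : ℝ := l ^ (-(1 / (p - 1))) * ((p - 1) / p) with hcdef
  set f : ℝ → ℝ := fun x => l / (p * β) * x ^ β + c * x - x ^ γ / γ with hfdef
  have hderiv' : ∀ x : ℝ, HasDerivAt f
      (l * x ^ (β - 1) / p + c - x ^ (γ - 1)) x := by
    intro x
    have h1 : HasDerivAt (fun x : ℝ => x ^ β) (β * x ^ (β - 1)) x :=
      Real.hasDerivAt_rpow_const (Or.inr hβ)
    have h2 : HasDerivAt (fun x : ℝ => x ^ γ) (γ * x ^ (γ - 1)) x :=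
      Real.hasDerivAt_rpow_const (Or.inr hγ1)
    have h3 := ((h1.const_mul (l / (p * β))).add ((hasDerivAt_id x).const_mul c)).sub
      (h2.div_const γ)
    have e : l / (p * β) * (β * x ^ (β - 1)) + c * 1 - γ * x ^ (γ - 1) / γ
        = l * x ^ (β - 1) / p + c - x ^ (γ - 1) := by
      field_simp
    rw [e] at h3
    exact h3
  have hmono : MonotoneOn f (Set.Icc b a) := by
    apply monotoneOn_of_deriv_nonneg (convex_Icc b a)
    · exact fun x _ => ((hderiv' x).continuousAt).continuousWithinAt
    · exact fun x _ => ((hderiv' x).differentiableAt).differentiableWithinAt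
    · intro x hx
      rw [interior_Icc] at hx
      have hx0 : 0 ≤ x := le_trans hb hx.1.le
      rw [(hderiv' x).deriv]
      have := young_step p β l x hp hβ hl hx0
      rw [← hγm1] at this
      rw [hcdef]
      linarith
  have hfb : f b ≤ f a := hmono (Set.left_mem_Icc.2 hab) (Set.right_mem_Icc.2 hab) hab
  rw [hfdef] at hfb
  simp only at hfb
  have hdiff : l * ((a ^ β - b ^ β) / β) / p + c * (a - b) - (a ^ γ - b ^ γ) / γ
      = (l / (p * β) * a ^ β + c * a - a ^ γ / γ)
        - (l / (p * β) * b ^ β + c * b - b ^ γ / γ) := by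
    field_simp
    ring
  linarith [hfb, hdiff]

/-- Hölder-type inequality after optimizing `l`. -/
lemma holder_key (p β a b : ℝ) (hp : 1 < p) (hβ : 1 ≤ β) (hb : 0 ≤ b) (hab : b < a) :
    ((a ^ ((β+p-1)/p) - b ^ ((β+p-1)/p)) / ((β+p-1)/p)) ^ p ≤
      (a ^ β - b ^ β) / β * (a - b) ^ (p - 1) := by
  have hp0 : (0:ℝ) < p := lt_trans one_pos hp
  have hβ0 : (0:ℝ) < β := lt_of_lt_of_le one_pos hβ
  have ha : 0 < a := lt_of_le_of_lt hb hab
  have hB : (0:ℝ) < a - b := sub_pos.2 hab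
  have hA : (0:ℝ) < (a ^ β - b ^ β) / β := by
    have : b ^ β < a ^ β := Real.rpow_lt_rpow hb hab hβ0
    have h2 : 0 < a ^ β - b ^ β := sub_pos.2 this
    positivity
  set A : ℝ := (a ^ β - b ^ β) / β with hAdef
  set B : ℝ := a - b with hBdef
  set l : ℝ := (B / A) ^ ((p - 1) / p) with hldef
  have hBA : (0:ℝ) < B / A := div_pos hB hA
  have hl : 0 < l := Real.rpow_pos_of_pos hBA _
  have key := mono_step p β l a b hp hβ hl hb hab.le
  have hAsplit : A = A ^ ((p-1)/p) * A ^ (1/p) := by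
    rw [← Real.rpow_add hA, show (p-1)/p + 1/p = 1 by field_simp; ring, Real.rpow_one]
  have hBsplit : B = B ^ (1/p) * B ^ ((p-1)/p) := by
    rw [← Real.rpow_add hB, show 1/p + (p-1)/p = 1 by field_simp; ring, Real.rpow_one]
  have hAe : (0:ℝ) < A ^ ((p-1)/p) := Real.rpow_pos_of_pos hA _
  have hBe : (0:ℝ) < B ^ (1/p) := Real.rpow_pos_of_pos hB _
  have e1 : l * A = A ^ (1/p) * B ^ ((p-1)/p) := by
    calc l * A = B ^ ((p-1)/p) / A ^ ((p-1)/p) * (A ^ ((p-1)/p) * A ^ (1/p)) := by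
          rw [hldef, Real.div_rpow hB.le hA.le, ← hAsplit]
      _ = A ^ (1/p) * B ^ ((p-1)/p) := by
          field_simp
  have e2 : l ^ (-(1 / (p - 1))) * B = A ^ (1/p) * B ^ ((p-1)/p) := by
    have hexp : (p-1)/p * -(1/(p-1)) = -(1/p) := by
      have h1 : p ≠ 0 := hp0.ne'
      have h2 : p - 1 ≠ 0 := by linarith
      field_simp
    calc l ^ (-(1 / (p - 1))) * B
        = A ^ (1/p) / B ^ (1/p) * (B ^ (1/p) * B ^ ((p-1)/p)) := by
          rw [hldef, ← Real.rpow_mul hBA.le, hexp, Real.rpow_neg hBA.le,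
            Real.div_rpow hB.le hA.le, inv_div, ← hBsplit]
      _ = A ^ (1/p) * B ^ ((p-1)/p) := by
          field_simp
  have hRHS : l * A / p + l ^ (-(1 / (p - 1))) * ((p - 1) / p) * B
      = A ^ (1/p) * B ^ ((p-1)/p) := by
    calc l * A / p + l ^ (-(1 / (p - 1))) * ((p - 1) / p) * B
        = (l * A) * (1/p) + (l ^ (-(1 / (p - 1))) * B) * ((p-1)/p) := by ring
      _ = A ^ (1/p) * B ^ ((p-1)/p) * (1/p + (p-1)/p) := by rw [e1, e2]; ring
      _ = A ^ (1/p) * B ^ ((p-1)/p) := by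
          rw [show 1/p + (p-1)/p = 1 by field_simp; ring, mul_one]
  rw [hRHS] at key
  have hD0 : 0 ≤ (a ^ ((β+p-1)/p) - b ^ ((β+p-1)/p)) / ((β+p-1)/p) := by
    have hγ0 : (0:ℝ) < (β + p - 1) / p := div_pos (by linarith) hp0
    have hnum : b ^ ((β+p-1)/p) ≤ a ^ ((β+p-1)/p) :=
      Real.rpow_le_rpow hb hab.le hγ0.le
    exact div_nonneg (sub_nonneg.2 hnum) hγ0.le
  calc ((a ^ ((β+p-1)/p) - b ^ ((β+p-1)/p)) / ((β+p-1)/p)) ^ p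
      ≤ (A ^ (1/p) * B ^ ((p-1)/p)) ^ p := Real.rpow_le_rpow hD0 key hp0.le
    _ = A * B ^ (p-1) := by
        rw [Real.mul_rpow (Real.rpow_nonneg hA.le _) (Real.rpow_nonneg hB.le _),
          ← Real.rpow_mul hA.le, ← Real.rpow_mul hB.le,
          one_div_mul_cancel hp0.ne', div_mul_cancel₀ _ hp0.ne', Real.rpow_one]

/-- Main inequality in the case `b < a`. -/
lemma main_lt (p β a b : ℝ) (hp : 1 < p) (hβ : 1 ≤ β) (hb : 0 ≤ b) (hab : b < a) :
    |a - b| ^ (p - 2) * (a - b) * (a ^ β - b ^ β) ≥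
      β * p ^ p / (β + p - 1) ^ p *
        |a ^ ((β + p - 1) / p) - b ^ ((β + p - 1) / p)| ^ p := by
  have hp0 : (0:ℝ) < p := lt_trans one_pos hp
  have hβ0 : (0:ℝ) < β := lt_of_lt_of_le one_pos hβ
  have hB : (0:ℝ) < a - b := sub_pos.2 hab
  set γ : ℝ := (β + p - 1) / p with hγdef
  have hγ0 : (0:ℝ) < γ := div_pos (by linarith) hp0
  have hsum : β + p - 1 = γ * p := by rw [hγdef]; field_simp
  have habs : |a - b| = a - b := abs_of_pos hB
  have hγab : b ^ γ < a ^ γ := Real.rpow_lt_rpow hb hab hγ0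
  have habs2 : |a ^ γ - b ^ γ| = a ^ γ - b ^ γ := abs_of_pos (sub_pos.2 hγab)
  rw [habs, habs2]
  have hpow : (a - b) ^ (p - 2) * (a - b) = (a - b) ^ (p - 1) := by
    nth_rewrite 2 [← Real.rpow_one (a - b)]
    rw [← Real.rpow_add hB]
    congr 1
    ring
  rw [hpow]
  have hγp : (0:ℝ) < γ ^ p := Real.rpow_pos_of_pos hγ0 _
  have hpp : (0:ℝ) < p ^ p := Real.rpow_pos_of_pos hp0 _
  have hcoef : β * p ^ p / (β + p - 1) ^ p = β / γ ^ p := by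
    rw [hsum, Real.mul_rpow hγ0.le hp0.le, div_eq_div_iff (by positivity) hγp.ne']
    ring
  rw [hcoef]
  have key := holder_key p β a b hp hβ hb hab
  have hD0 : 0 ≤ a ^ γ - b ^ γ := (sub_pos.2 hγab).le
  rw [Real.div_rpow hD0 hγ0.le] at key
  rw [ge_iff_le, div_mul_eq_mul_div, div_le_iff₀ hγp]
  calc β * (a ^ γ - b ^ γ) ^ p = β * γ ^ p * ((a ^ γ - b ^ γ) ^ p / γ ^ p) := by
        field_simp
    _ ≤ β * γ ^ p * ((a ^ β - b ^ β) / β * (a - b) ^ (p - 1)) :=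
        mul_le_mul_of_nonneg_left key (by positivity)
    _ = (a - b) ^ (p - 1) * (a ^ β - b ^ β) * γ ^ p := by
        field_simp

theorem pointwise_power_inequality (p β a b : ℝ) (hp : 1 < p) (hβ : 1 ≤ β)
    (ha : 0 ≤ a) (hb : 0 ≤ b) :
    |a - b| ^ (p - 2) * (a - b) * (a ^ β - b ^ β) ≥
      β * p ^ p / (β + p - 1) ^ p *
        |a ^ ((β + p - 1) / p) - b ^ ((β + p - 1) / p)| ^ p := by
  rcases lt_trichotomy a b with h | h | h
  · have := main_lt p β b a hp hβ ha h
    rw [abs_sub_comm b a, abs_sub_comm (b ^ ((β + p - 1) / p)) (a ^ ((β + p - 1) / p))] at this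
    calc β * p ^ p / (β + p - 1) ^ p *
          |a ^ ((β + p - 1) / p) - b ^ ((β + p - 1) / p)| ^ p
        ≤ |a - b| ^ (p - 2) * (b - a) * (b ^ β - a ^ β) := this
      _ = |a - b| ^ (p - 2) * (a - b) * (a ^ β - b ^ β) := by ring
  · subst h
    have hp0 : (0:ℝ) < p := lt_trans one_pos hp
    simp [Real.zero_rpow hp0.ne']
  · exact main_lt p β a b hp hβ hb h
end

section
/- For every real exponent p > 1, every β ≥ 1, every M ≥ 0, and all nonnegative reals a, b, setting a_M = min(a,M) and b_M = min(b,M), one has |a-b|^{p-2}(a-b)(a_M^β - b_M^β) ≥ (β p^p / (β+p-1)^p) · |a_M^{(β+p-1)/p} - b_M^{(β+p-1)/p}|^p. -/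
open MeasureTheory intervalIntegral

lemma holder_step (p β x y : ℝ) (hp : 1 < p) (hβ : 1 ≤ β) (hy : 0 ≤ y) (hxy : y ≤ x) :
    x ^ ((β + p - 1) / p) - y ^ ((β + p - 1) / p) ≤
      ((β + p - 1) / p) * (((x ^ β - y ^ β) / β) ^ (1 / p) * (x - y) ^ ((p - 1) / p)) := by
  have hp0 : (0:ℝ) < p := lt_trans one_pos hp
  set r : ℝ := (β - 1) / p with hr
  have hr0 : 0 ≤ r := div_nonneg (by linarith) hp0.le
  set q : ℝ := p / (p - 1) with hq
  have hpq : p.HolderConjugate q := Real.HolderConjugate.conjExponent hp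
  set μ : Measure ℝ := volume.restrict (Set.Ioc y x) with hμ
  haveI hμfin : IsFiniteMeasure μ := by
    constructor
    rw [hμ, Measure.restrict_apply_univ, Real.volume_Ioc]
    exact ENNReal.ofReal_lt_top
  have hmeas : Measurable fun t : ℝ => t ^ r := (Real.continuous_rpow_const hr0).measurable
  have hf : MemLp (fun t : ℝ => t ^ r) (ENNReal.ofReal p) μ := by
    refine MemLp.of_bound hmeas.aestronglyMeasurable (x ^ r) ?_
    rw [hμ, ae_restrict_iff' measurableSet_Ioc]
    filter_upwards with t ht
    rw [Real.norm_of_nonneg (Real.rpow_nonneg (hy.trans ht.1.le) r)]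
    exact Real.rpow_le_rpow (hy.trans ht.1.le) ht.2 hr0
  have hg : MemLp (fun _ : ℝ => (1:ℝ)) (ENNReal.ofReal q) μ := memLp_const 1
  have hfnn : 0 ≤ᵐ[μ] fun t : ℝ => t ^ r := by
    rw [hμ, Filter.EventuallyLE, ae_restrict_iff' measurableSet_Ioc]
    filter_upwards with t ht
    simpa using Real.rpow_nonneg (hy.trans ht.1.le) r
  have hgnn : 0 ≤ᵐ[μ] fun _ : ℝ => (1:ℝ) := .of_forall fun _ => zero_le_one
  have H := integral_mul_le_Lp_mul_Lq_of_nonneg hpq hfnn hgnn hf hg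
  have hrp : r * p = β - 1 := div_mul_cancel₀ _ hp0.ne'
  have E1 : ∫ t, t ^ r * 1 ∂μ = (x ^ (r + 1) - y ^ (r + 1)) / (r + 1) := by
    simp only [mul_one, hμ]
    rw [← integral_of_le hxy]
    exact integral_rpow (Or.inl (by linarith))
  have E2 : ∫ t, (t ^ r) ^ p ∂μ = (x ^ β - y ^ β) / β := by
    rw [hμ, setIntegral_congr_fun measurableSet_Ioc
      (g := fun t : ℝ => t ^ (β - 1)) (fun t ht => by
        simp only
        rw [← Real.rpow_mul (hy.trans ht.1.le), hrp]),
      ← integral_of_le hxy,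
      integral_rpow (Or.inl (by linarith : (-1:ℝ) < β - 1))]
    norm_num
  have E3 : ∫ t, (1:ℝ) ^ q ∂μ = x - y := by
    simp only [Real.one_rpow, hμ, setIntegral_const, smul_eq_mul, mul_one,
      Real.volume_Ioc, ENNReal.toReal_ofReal (sub_nonneg.2 hxy), Real.volume_real_Ioc_of_le hxy]
  rw [E1, E2, E3] at H
  have hq1 : 1 / q = (p - 1) / p := by
    rw [hq]
    field_simp
  rw [hq1] at H
  have hr1 : r + 1 = (β + p - 1) / p := by
    rw [hr]; field_simp; ring
  have hγ : (0:ℝ) < r + 1 := by linarith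
  calc x ^ ((β + p - 1) / p) - y ^ ((β + p - 1) / p)
      = (r + 1) * ((x ^ (r + 1) - y ^ (r + 1)) / (r + 1)) := by
        rw [mul_div_cancel₀ _ hγ.ne', hr1]
    _ ≤ (r + 1) * (((x ^ β - y ^ β) / β) ^ (1 / p) * (x - y) ^ ((p - 1) / p)) := by
        exact mul_le_mul_of_nonneg_left H hγ.le
    _ = ((β + p - 1) / p) * (((x ^ β - y ^ β) / β) ^ (1 / p) * (x - y) ^ ((p - 1) / p)) := by
        rw [hr1]

lemma key_ineq (p β x y : ℝ) (hp : 1 < p) (hβ : 1 ≤ β) (hy : 0 ≤ y) (hxy : y ≤ x) :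
    (x ^ ((β + p - 1) / p) - y ^ ((β + p - 1) / p)) ^ p ≤
      ((β + p - 1) / p) ^ p * (((x ^ β - y ^ β) / β) * (x - y) ^ (p - 1)) := by
  have hp0 : (0:ℝ) < p := lt_trans one_pos hp
  have hγ0 : (0:ℝ) ≤ (β + p - 1) / p := div_nonneg (by linarith) hp0.le
  have hA0 : (0:ℝ) ≤ (x ^ β - y ^ β) / β :=
    div_nonneg (sub_nonneg.2 (Real.rpow_le_rpow hy hxy (by linarith))) (by linarith)
  have hB0 : (0:ℝ) ≤ x - y := sub_nonneg.2 hxy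
  have hL0 : (0:ℝ) ≤ x ^ ((β + p - 1) / p) - y ^ ((β + p - 1) / p) :=
    sub_nonneg.2 (Real.rpow_le_rpow hy hxy hγ0)
  have h2 := Real.rpow_le_rpow hL0 (holder_step p β x y hp hβ hy hxy) hp0.le
  refine h2.trans_eq ?_
  rw [Real.mul_rpow hγ0 (mul_nonneg (Real.rpow_nonneg hA0 _) (Real.rpow_nonneg hB0 _)),
    Real.mul_rpow (Real.rpow_nonneg hA0 _) (Real.rpow_nonneg hB0 _),
    ← Real.rpow_mul hA0, ← Real.rpow_mul hB0, one_div_mul_cancel hp0.ne',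
    div_mul_cancel₀ _ hp0.ne', Real.rpow_one]

theorem pointwise_power_inequality_truncated (p β M a b : ℝ) (hp : 1 < p) (hβ : 1 ≤ β)
    (hM : 0 ≤ M) (ha : 0 ≤ a) (hb : 0 ≤ b) :
    |a - b| ^ (p - 2) * (a - b) * (min a M ^ β - min b M ^ β) ≥
      β * p ^ p / (β + p - 1) ^ p *
        |min a M ^ ((β + p - 1) / p) - min b M ^ ((β + p - 1) / p)| ^ p := by
  wlog hab : b ≤ a with H
  · have h := H p β M b a hp hβ hM hb ha (le_of_not_ge hab)
    rw [abs_sub_comm b a,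
      abs_sub_comm (min b M ^ ((β + p - 1) / p)) (min a M ^ ((β + p - 1) / p))] at h
    have e : |a - b| ^ (p - 2) * (a - b) * (min a M ^ β - min b M ^ β)
        = |a - b| ^ (p - 2) * (b - a) * (min b M ^ β - min a M ^ β) := by ring
    rw [e]
    exact h
  have hp0 : (0:ℝ) < p := lt_trans one_pos hp
  set x := min a M with hx
  set y := min b M with hy'
  have hy : 0 ≤ y := le_min hb hM
  have hxy : y ≤ x := min_le_min hab le_rfl
  have hdiff : x - y ≤ a - b := by
    rcases le_total b M with h | h
    · rw [hy', min_eq_left h]; have := min_le_left a M; linarith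
    · rw [hy', min_eq_right h]; have := min_le_right a M; linarith
  rcases eq_or_lt_of_le hab with heq | hlt
  · subst heq
    simp [hx, hy', Real.zero_rpow hp0.ne']
  have hab0 : 0 < a - b := sub_pos.2 hlt
  have habs : |a - b| = a - b := abs_of_pos hab0
  have hγ0 : (0:ℝ) ≤ (β + p - 1) / p := div_nonneg (by linarith) hp0.le
  have hL0 : (0:ℝ) ≤ x ^ ((β + p - 1) / p) - y ^ ((β + p - 1) / p) :=
    sub_nonneg.2 (Real.rpow_le_rpow hy hxy hγ0)
  have hD0 : (0:ℝ) ≤ x ^ β - y ^ β :=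
    sub_nonneg.2 (Real.rpow_le_rpow hy hxy (by linarith))
  rw [habs, abs_of_nonneg hL0]
  have e1 : (a - b) ^ (p - 2) * (a - b) = (a - b) ^ (p - 1) := by
    rw [← Real.rpow_add_one hab0.ne' (p - 2)]
    ring_nf
  rw [e1]
  -- main estimate
  have hK := key_ineq p β x y hp hβ hy hxy
  have hmono : (x - y) ^ (p - 1) ≤ (a - b) ^ (p - 1) :=
    Real.rpow_le_rpow (sub_nonneg.2 hxy) hdiff (by linarith)
  have hA0 : (0:ℝ) ≤ (x ^ β - y ^ β) / β := div_nonneg hD0 (by linarith)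
  have hC0 : (0:ℝ) ≤ β * p ^ p / (β + p - 1) ^ p := by
    have h1 : (0:ℝ) < p ^ p := Real.rpow_pos_of_pos hp0 p
    have h2 : (0:ℝ) < (β + p - 1) ^ p := Real.rpow_pos_of_pos (by linarith) p
    positivity
  have hγp0 : (0:ℝ) ≤ ((β + p - 1) / p) ^ p := Real.rpow_nonneg hγ0 p
  have hCγ : β * p ^ p / (β + p - 1) ^ p * ((β + p - 1) / p) ^ p = β := by
    rw [Real.div_rpow (by linarith : (0:ℝ) ≤ β + p - 1) hp0.le]
    have h1 : (p:ℝ) ^ p ≠ 0 := (Real.rpow_pos_of_pos hp0 p).ne'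
    have h2 : ((β + p - 1):ℝ) ^ p ≠ 0 := (Real.rpow_pos_of_pos (by linarith) p).ne'
    field_simp
  calc β * p ^ p / (β + p - 1) ^ p * (x ^ ((β + p - 1) / p) - y ^ ((β + p - 1) / p)) ^ p
      ≤ β * p ^ p / (β + p - 1) ^ p *
          (((β + p - 1) / p) ^ p * (((x ^ β - y ^ β) / β) * (x - y) ^ (p - 1))) :=
        mul_le_mul_of_nonneg_left hK hC0
    _ ≤ β * p ^ p / (β + p - 1) ^ p *
          (((β + p - 1) / p) ^ p * (((x ^ β - y ^ β) / β) * (a - b) ^ (p - 1))) := by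
        apply mul_le_mul_of_nonneg_left _ hC0
        exact mul_le_mul_of_nonneg_left (mul_le_mul_of_nonneg_left hmono hA0) hγp0
    _ = (a - b) ^ (p - 1) * (x ^ β - y ^ β) := by
        have hβ0 : (β:ℝ) ≠ 0 := by linarith
        rw [show β * p ^ p / (β + p - 1) ^ p *
            (((β + p - 1) / p) ^ p * (((x ^ β - y ^ β) / β) * (a - b) ^ (p - 1)))
          = (β * p ^ p / (β + p - 1) ^ p * ((β + p - 1) / p) ^ p) *
            (((x ^ β - y ^ β) / β) * (a - b) ^ (p - 1)) from by ring, hCγ]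
        field_simp
end

section
/- Let p > 1, β ≥ 1, M ≥ 0, a, b ≥ 0, and set a_M = min(a,M), b_M = min(b,M). Then |a_M - b_M|^{p-2}(a_M - b_M)(a_M^β - b_M^β) ≤ |a-b|^{p-2}(a-b)(a_M^β - b_M^β). -/
theorem truncation_monotonicity (p β M a b : ℝ) (hp : 1 < p) (hβ : 1 ≤ β)
    (hM : 0 ≤ M) (ha : 0 ≤ a) (hb : 0 ≤ b) :
    |min a M - min b M| ^ (p - 2) * (min a M - min b M) *
        (min a M ^ β - min b M ^ β) ≤
      |a - b| ^ (p - 2) * (a - b) * (min a M ^ β - min b M ^ β) := by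
  have key : ∀ a b : ℝ, 0 ≤ a → 0 ≤ b → b ≤ a →
      |min a M - min b M| ^ (p - 2) * (min a M - min b M) *
        (min a M ^ β - min b M ^ β) ≤
      |a - b| ^ (p - 2) * (a - b) * (min a M ^ β - min b M ^ β) := by
    intro a b ha hb hab
    have hm : min b M ≤ min a M := min_le_min hab le_rfl
    have h1 : min a M - min b M ≤ a - b := by
      rcases le_total a M with h | h <;> rcases le_total b M with h' | h' <;>
        simp [min_eq_left, min_eq_right, *] <;> linarith
    have hs : 0 ≤ min a M ^ β - min b M ^ β :=
      sub_nonneg.2 (Real.rpow_le_rpow (le_min hb hM) hm (by linarith))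
    have e : ∀ x : ℝ, 0 ≤ x → |x| ^ (p - 2) * x = x ^ (p - 1) := by
      intro x hx
      rcases eq_or_lt_of_le hx with h | h
      · rw [← h]
        simp [Real.zero_rpow (by linarith : p - 1 ≠ 0)]
      · rw [abs_of_pos h]
        nth_rewrite 2 [← Real.rpow_one x]
        rw [← Real.rpow_add h]
        ring_nf
    apply mul_le_mul_of_nonneg_right _ hs
    rw [e _ (sub_nonneg.2 hm), e _ (sub_nonneg.2 hab)]
    exact Real.rpow_le_rpow (sub_nonneg.2 hm) h1 (by linarith)
  rcases le_total b a with hab | hab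
  · exact key a b ha hb hab
  · have := key b a hb ha hab
    rw [abs_sub_comm (min b M) (min a M), abs_sub_comm b a] at this
    convert this using 1 <;> ring
end

section
/- For every real t with 0 ≤ t < 1, every p > 1, and every β ≥ 1, one has (1-t)^{p-1}(1-t^β) ≥ (β p^p/(β+p-1)^p)(1 - t^{(β+p-1)/p})^p. -/
open MeasureTheory Set Real

theorem scalar_power_inequality (t p β : ℝ) (ht0 : 0 ≤ t) (ht1 : t < 1)
    (hp : 1 < p) (hβ : 1 ≤ β) :
    (1 - t) ^ (p - 1) * (1 - t ^ β) ≥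
      β * p ^ p / (β + p - 1) ^ p * (1 - t ^ ((β + p - 1) / p)) ^ p := by
  have hp0 : (0:ℝ) < p := lt_trans one_pos hp
  have hβ0 : (0:ℝ) < β := lt_of_lt_of_le one_pos hβ
  have hbp : (0:ℝ) < β + p - 1 := by linarith
  have h1t : (0:ℝ) < 1 - t := by linarith
  set c : ℝ := (β - 1) / p with hc_def
  have hc : 0 ≤ c := div_nonneg (by linarith) hp0.le
  have hpne : p ≠ 0 := hp0.ne'
  have hc1 : c + 1 = (β + p - 1) / p := by rw [hc_def]; field_simp; ring
  have hcp : c * p = β - 1 := by rw [hc_def]; field_simp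
  set μ := volume.restrict (Icc t 1) with hμ_def
  have hμuniv : μ univ = ENNReal.ofReal (1 - t) := by
    rw [hμ_def, Measure.restrict_apply_univ, Real.volume_Icc]
  haveI : IsFiniteMeasure μ := ⟨by rw [hμuniv]; exact ENNReal.ofReal_lt_top⟩
  haveI : NeZero μ := ⟨by
    rw [← Measure.measure_univ_ne_zero, hμuniv]
    simp only [ne_eq, ENNReal.ofReal_eq_zero, not_le]; linarith⟩
  have hconv : ConvexOn ℝ (Icc (0:ℝ) 1) fun x : ℝ => x ^ p :=
    (convexOn_rpow hp.le).subset Icc_subset_Ici_self (convex_Icc 0 1)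
  have hgc : ContinuousOn (fun x : ℝ => x ^ p) (Icc (0:ℝ) 1) :=
    (Real.continuous_rpow_const hp0.le).continuousOn
  have hfs : ∀ᵐ x ∂μ, (x : ℝ) ^ c ∈ Icc (0:ℝ) 1 := by
    rw [hμ_def]
    filter_upwards [ae_restrict_mem measurableSet_Icc] with x hx
    exact ⟨Real.rpow_nonneg (le_trans ht0 hx.1) c,
      Real.rpow_le_one (le_trans ht0 hx.1) hx.2 hc⟩
  have hfi : Integrable (fun x : ℝ => x ^ c) μ :=
    (Real.continuous_rpow_const hc).continuousOn.integrableOn_Icc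
  have hgi : Integrable ((fun x : ℝ => x ^ p) ∘ fun x : ℝ => x ^ c) μ :=
    ((Real.continuous_rpow_const hp0.le).comp
      (Real.continuous_rpow_const hc)).continuousOn.integrableOn_Icc
  have jensen := hconv.map_average_le hgc isClosed_Icc hfs hfi hgi
  -- compute the two integrals
  have hI1 : ∫ x, x ^ c ∂μ = (1 - t ^ (c + 1)) / (c + 1) := by
    rw [hμ_def, MeasureTheory.integral_Icc_eq_integral_Ioc,
      ← intervalIntegral.integral_of_le ht1.le,
      integral_rpow (Or.inl (by linarith : (-1:ℝ) < c)), Real.one_rpow]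
  have hI2 : (∫ x, (x ^ c) ^ p ∂μ) = (1 - t ^ β) / β := by
    have hcongr : ∀ x ∈ Icc t 1, ((x : ℝ) ^ c) ^ p = x ^ (β - 1) := fun x hx => by
      rw [← Real.rpow_mul (le_trans ht0 hx.1), hcp]
    rw [hμ_def, MeasureTheory.setIntegral_congr_fun measurableSet_Icc hcongr,
      MeasureTheory.integral_Icc_eq_integral_Ioc,
      ← intervalIntegral.integral_of_le ht1.le,
      integral_rpow (Or.inl (by linarith : (-1:ℝ) < β - 1)), Real.one_rpow,
      sub_add_cancel]
  -- rewrite averages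
  have htoReal : μ.real univ = 1 - t := by rw [measureReal_def, hμuniv, ENNReal.toReal_ofReal h1t.le]
  rw [average_eq, average_eq, htoReal, smul_eq_mul, smul_eq_mul, hI1] at jensen
  rw [hI2] at jensen
  -- nonnegativity facts
  have hA : 0 ≤ 1 - t ^ (c + 1) :=
    sub_nonneg.mpr (Real.rpow_le_one ht0 ht1.le (by linarith))
  have hB : 0 ≤ 1 - t ^ β :=
    sub_nonneg.mpr (Real.rpow_le_one ht0 ht1.le (by linarith))
  have hc1pos : 0 < c + 1 := by linarith
  -- expand the left side of Jensen
  rw [Real.mul_rpow (inv_nonneg.mpr h1t.le) (div_nonneg hA hc1pos.le),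
    Real.inv_rpow h1t.le, Real.div_rpow hA hc1pos.le] at jensen
  have hCc : (c + 1) ^ p = (β + p - 1) ^ p / p ^ p := by
    rw [hc1, Real.div_rpow hbp.le hp0.le]
  have hP1 : (0:ℝ) < (1 - t) ^ p := Real.rpow_pos_of_pos h1t p
  have hpp : (0:ℝ) < p ^ p := Real.rpow_pos_of_pos hp0 p
  have hbpp : (0:ℝ) < (β + p - 1) ^ p := Real.rpow_pos_of_pos hbp p
  -- final algebra
  rw [ge_iff_le, ← hc1, Real.rpow_sub h1t, Real.rpow_one]
  calc β * p ^ p / (β + p - 1) ^ p * (1 - t ^ (c + 1)) ^ p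
      = (1 - t) ^ p * β * (((1 - t) ^ p)⁻¹ * ((1 - t ^ (c + 1)) ^ p / (c + 1) ^ p)) := by
        rw [hCc]; field_simp
    _ ≤ (1 - t) ^ p * β * ((1 - t)⁻¹ * ((1 - t ^ β) / β)) := by
        apply mul_le_mul_of_nonneg_left jensen (by positivity)
    _ = (1 - t) ^ p / (1 - t) * (1 - t ^ β) := by field_simp
end

section
/- Let s ∈ (0,1). For every u ∈ C^1_c(ℝ^N) (continuously differentiable with compact support), one has ∫∫_{ℝ^N×ℝ^N} |u(x)-u(y)|/|x-y|^{N+s} dx dy ≤ N ω_N ( (1/(1-s)) ∫_{ℝ^N} |∇u| dx + (2/s) ∫_{ℝ^N} |u| dx ), where ω_N is the Lebesgue measure of the unit ball in ℝ^N. -/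
open MeasureTheory Set Metric
open scoped ENNReal

local notation "dim" => Module.finrank ℝ

lemma lintegral_fun_norm_addHaar' {E : Type*} [NormedAddCommGroup E] [NormedSpace ℝ E]
    [MeasurableSpace E] [BorelSpace E] [Nontrivial E] [FiniteDimensional ℝ E]
    (μ : Measure E) [μ.IsAddHaarMeasure] (f : ℝ → ℝ≥0∞) (hf : Measurable f) :
    ∫⁻ x, f ‖x‖ ∂μ = (dim E) * μ (ball 0 1) *
      ∫⁻ y in Ioi (0 : ℝ), ENNReal.ofReal (y ^ (dim E - 1)) * f y := by
  have hmeas : Measurable ((f ∘ Subtype.val) ∘ (Prod.snd :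
      sphere (0 : E) 1 × Ioi (0 : ℝ) → Ioi (0 : ℝ))) :=
    (hf.comp measurable_subtype_coe).comp measurable_snd
  calc
    ∫⁻ x, f ‖x‖ ∂μ = ∫⁻ x in ({0}ᶜ : Set E), f ‖x‖ ∂μ := by
      rw [restrict_compl_singleton]
    _ = ∫⁻ x : ({0}ᶜ : Set E), f ‖x.1‖ ∂(μ.comap (↑)) :=
      (lintegral_subtype_comap (measurableSet_singleton _).compl (fun x => f ‖x‖)).symm
    _ = ∫⁻ p : sphere (0 : E) 1 × Ioi (0 : ℝ), ((f ∘ Subtype.val) ∘ Prod.snd) p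
          ∂μ.toSphere.prod (.volumeIoiPow (dim E - 1)) :=
      by rw [← μ.measurePreserving_homeomorphUnitSphereProd.lintegral_comp hmeas]; simp [homeomorphUnitSphereProd]
    _ = μ.toSphere univ * ∫⁻ y : Ioi (0 : ℝ), f y ∂(Measure.volumeIoiPow (dim E - 1)) := by
      rw [lintegral_prod _ hmeas.aemeasurable]
      simp only [Function.comp_apply, lintegral_const]
      exact mul_comm _ _
    _ = (dim E) * μ (ball 0 1) *
          ∫⁻ y in Ioi (0 : ℝ), ENNReal.ofReal (y ^ (dim E - 1)) * f y := by
      rw [μ.toSphere_apply_univ, Measure.volumeIoiPow,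
        lintegral_withDensity_eq_lintegral_mul _
          (by exact (measurable_subtype_coe.pow_const _).ennreal_ofReal)
          (show Measurable fun y : Ioi (0:ℝ) => f ↑y from hf.comp measurable_subtype_coe)]
      congr 1
      exact lintegral_subtype_comap measurableSet_Ioi
        (fun y => ENNReal.ofReal (y ^ (dim E - 1)) * f y)


lemma measurable_rpow_const' (a : ℝ) : Measurable fun y : ℝ => y ^ a :=
  measurable_of_continuousOn_compl_singleton 0 fun y hy =>
    (Real.continuousAt_rpow_const y a (Or.inl hy)).continuousWithinAt

lemma aux_pow_mul_rpow {n : ℕ} (hn : 1 ≤ n) {y : ℝ} (hy : 0 < y) (a : ℝ) :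
    y ^ (n - 1) * y ^ a = y ^ (((n : ℝ) - 1) + a) := by
  rw [← Real.rpow_natCast y (n - 1), ← Real.rpow_add hy]
  congr 2
  push_cast [Nat.cast_sub hn]
  ring

lemma lintegral_ball_rpow {E : Type*} [NormedAddCommGroup E] [NormedSpace ℝ E]
    [MeasurableSpace E] [BorelSpace E] [Nontrivial E] [FiniteDimensional ℝ E]
    (μ : Measure E) [μ.IsAddHaarMeasure] {s : ℝ} (hs0 : 0 < s) (hs1 : s < 1) :
    ∫⁻ h in ball (0 : E) 1, ENNReal.ofReal (‖h‖ ^ (1 - ((dim E : ℝ) + s))) ∂μ =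
      (dim E) * μ (ball 0 1) * ENNReal.ofReal (1 / (1 - s)) := by
  set a : ℝ := 1 - ((dim E : ℝ) + s) with ha
  set g : ℝ → ℝ≥0∞ := (Iio (1 : ℝ)).indicator (fun y => ENNReal.ofReal (y ^ a)) with hg
  have hgm : Measurable g :=
    ((measurable_rpow_const' a).ennreal_ofReal).indicator measurableSet_Iio
  have h1 : ∫⁻ h in ball (0 : E) 1, ENNReal.ofReal (‖h‖ ^ a) ∂μ = ∫⁻ h, g ‖h‖ ∂μ := by
    rw [← lintegral_indicator measurableSet_ball]
    refine lintegral_congr fun h => ?_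
    by_cases hh : h ∈ ball (0 : E) 1
    · rw [indicator_of_mem hh, hg, indicator_of_mem (by simpa [mem_ball_zero_iff] using hh)]
    · rw [indicator_of_notMem hh, hg,
        indicator_of_notMem (by simpa [mem_ball_zero_iff] using hh)]
  rw [h1, lintegral_fun_norm_addHaar' μ g hgm]
  congr 1
  have hdim : 1 ≤ dim E := Module.finrank_pos
  have hsplit : Ioi (0 : ℝ) = Ioo (0 : ℝ) 1 ∪ Ici (1 : ℝ) := (Ioo_union_Ici_eq_Ioi one_pos).symm
  rw [hsplit, lintegral_union measurableSet_Ici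
    (Set.disjoint_left.mpr fun x hx hx' => absurd hx.2 (not_lt.mpr hx'))]
  have hzero : ∫⁻ y in Ici (1 : ℝ), ENNReal.ofReal (y ^ (dim E - 1)) * g y = 0 := by
    have : ∫⁻ y in Ici (1 : ℝ), ENNReal.ofReal (y ^ (dim E - 1)) * g y =
        ∫⁻ _ in Ici (1 : ℝ), (0 : ENNReal) :=
      setLIntegral_congr_fun measurableSet_Ici (fun y (hy : 1 ≤ y) => by
        rw [hg, indicator_of_notMem (by simpa using hy), mul_zero])
    simp [this]
  rw [hzero, add_zero]
  have hcong : ∫⁻ y in Ioo (0 : ℝ) 1, ENNReal.ofReal (y ^ (dim E - 1)) * g y =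
      ∫⁻ y in Ioo (0 : ℝ) 1, ENNReal.ofReal (y ^ (-s)) := by
    refine setLIntegral_congr_fun measurableSet_Ioo (fun y hy => ?_)
    rw [hg, indicator_of_mem (mem_Iio.2 hy.2),
      ← ENNReal.ofReal_mul (pow_nonneg hy.1.le _), aux_pow_mul_rpow hdim hy.1,
      show ((dim E : ℝ) - 1) + a = -s by rw [ha]; ring]
  rw [hcong]
  have hint : IntegrableOn (fun y : ℝ => y ^ (-s)) (Ioo (0 : ℝ) 1) := by
    rw [← intervalIntegrable_iff_integrableOn_Ioo_of_le zero_le_one]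
    exact intervalIntegral.intervalIntegrable_rpow' (by linarith)
  rw [← ofReal_integral_eq_lintegral_ofReal hint
    ((ae_restrict_mem measurableSet_Ioo).mono fun y hy => Real.rpow_nonneg hy.1.le _)]
  congr 1
  rw [← MeasureTheory.integral_Ioc_eq_integral_Ioo, ← intervalIntegral.integral_of_le zero_le_one,
    integral_rpow (Or.inl (by linarith))]
  rw [Real.one_rpow, Real.zero_rpow (by linarith)]
  rw [show (-s + 1 : ℝ) = 1 - s by ring, sub_zero]

lemma lintegral_compl_ball_rpow {E : Type*} [NormedAddCommGroup E] [NormedSpace ℝ E]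
    [MeasurableSpace E] [BorelSpace E] [Nontrivial E] [FiniteDimensional ℝ E]
    (μ : Measure E) [μ.IsAddHaarMeasure] {s : ℝ} (hs0 : 0 < s) :
    ∫⁻ h in (ball (0 : E) 1)ᶜ, ENNReal.ofReal (‖h‖ ^ (-((dim E : ℝ) + s))) ∂μ =
      (dim E) * μ (ball 0 1) * ENNReal.ofReal (1 / s) := by
  set a : ℝ := -((dim E : ℝ) + s) with ha
  set g : ℝ → ℝ≥0∞ := (Ici (1 : ℝ)).indicator (fun y => ENNReal.ofReal (y ^ a)) with hg
  have hgm : Measurable g :=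
    ((measurable_rpow_const' a).ennreal_ofReal).indicator measurableSet_Ici
  have h1 : ∫⁻ h in (ball (0 : E) 1)ᶜ, ENNReal.ofReal (‖h‖ ^ a) ∂μ = ∫⁻ h, g ‖h‖ ∂μ := by
    rw [← lintegral_indicator measurableSet_ball.compl]
    refine lintegral_congr fun h => ?_
    by_cases hh : h ∈ (ball (0 : E) 1)ᶜ
    · rw [indicator_of_mem hh, hg,
        indicator_of_mem (by simpa [mem_ball_zero_iff, not_lt] using hh)]
    · rw [indicator_of_notMem hh, hg,
        indicator_of_notMem (by simpa [mem_ball_zero_iff, not_le] using hh)]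
  rw [h1, lintegral_fun_norm_addHaar' μ g hgm]
  congr 1
  have hdim : 1 ≤ dim E := Module.finrank_pos
  have hsplit : Ioi (0 : ℝ) = Ioo (0 : ℝ) 1 ∪ Ici (1 : ℝ) := (Ioo_union_Ici_eq_Ioi one_pos).symm
  rw [hsplit, lintegral_union measurableSet_Ici
    (Set.disjoint_left.mpr fun x hx hx' => absurd hx.2 (not_lt.mpr hx'))]
  have hzero : ∫⁻ y in Ioo (0 : ℝ) 1, ENNReal.ofReal (y ^ (dim E - 1)) * g y = 0 := by
    have : ∫⁻ y in Ioo (0 : ℝ) 1, ENNReal.ofReal (y ^ (dim E - 1)) * g y =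
        ∫⁻ _ in Ioo (0 : ℝ) 1, (0 : ENNReal) :=
      setLIntegral_congr_fun measurableSet_Ioo (fun y hy => by
        rw [hg, indicator_of_notMem (by simpa using hy.2), mul_zero])
    simp [this]
  rw [hzero, zero_add]
  have hcong : ∫⁻ y in Ici (1 : ℝ), ENNReal.ofReal (y ^ (dim E - 1)) * g y =
      ∫⁻ y in Ici (1 : ℝ), ENNReal.ofReal (y ^ (-1 - s)) := by
    refine setLIntegral_congr_fun measurableSet_Ici (fun y (hy : 1 ≤ y) => ?_)
    rw [hg, indicator_of_mem (mem_Ici.2 hy),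
      ← ENNReal.ofReal_mul (pow_nonneg (by linarith) _), aux_pow_mul_rpow hdim (by linarith),
      show ((dim E : ℝ) - 1) + a = -1 - s by rw [ha]; ring]
  rw [hcong, ← Measure.restrict_congr_set Ioi_ae_eq_Ici]
  have hint : IntegrableOn (fun y : ℝ => y ^ (-1 - s)) (Ioi (1 : ℝ)) :=
    integrableOn_Ioi_rpow_of_lt (by linarith) one_pos
  rw [← ofReal_integral_eq_lintegral_ofReal hint
    ((ae_restrict_mem measurableSet_Ioi).mono fun y hy => Real.rpow_nonneg (by linarith [mem_Ioi.1 hy]) _)]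
  congr 1
  rw [integral_Ioi_rpow_of_lt (by linarith) one_pos, Real.one_rpow,
    show (-1 - s + 1 : ℝ) = -s by ring, neg_div_neg_eq]


lemma K2_bound {N : ℕ} (u : EuclideanSpace ℝ (Fin N) → ℝ) (hu : Continuous u)
    (h : EuclideanSpace ℝ (Fin N)) :
    (∫⁻ x, ENNReal.ofReal |u x - u (x + h)|) ≤ 2 * ∫⁻ x, ENNReal.ofReal |u x| := by
  calc (∫⁻ x, ENNReal.ofReal |u x - u (x + h)|)
      ≤ ∫⁻ x, (ENNReal.ofReal |u x| + ENNReal.ofReal |u (x + h)|) :=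
        lintegral_mono fun x =>
          le_trans (ENNReal.ofReal_le_ofReal (by simpa using norm_sub_le (u x) (u (x + h))))
            ENNReal.ofReal_add_le
    _ = (∫⁻ x, ENNReal.ofReal |u x|) + ∫⁻ x, ENNReal.ofReal |u (x + h)| :=
        lintegral_add_left (hu.measurable.abs.ennreal_ofReal) _
    _ = (∫⁻ x, ENNReal.ofReal |u x|) + ∫⁻ x, ENNReal.ofReal |u x| := by
        rw [lintegral_add_right_eq_self (fun z => ENNReal.ofReal |u z|) h]
    _ = 2 * ∫⁻ x, ENNReal.ofReal |u x| := (two_mul _).symm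


lemma K1_bound {N : ℕ} (u : EuclideanSpace ℝ (Fin N) → ℝ) (hu : ContDiff ℝ 1 u)
    (h : EuclideanSpace ℝ (Fin N)) :
    (∫⁻ x, ENNReal.ofReal |u x - u (x + h)|) ≤
      ENNReal.ofReal ‖h‖ * ∫⁻ x, ENNReal.ofReal ‖fderiv ℝ u x‖ := by
  have hf'cont : Continuous (fderiv ℝ u) := hu.continuous_fderiv one_ne_zero
  have hcont3 : Continuous fun q : (EuclideanSpace ℝ (Fin N)) × ℝ =>
      ‖fderiv ℝ u (q.1 + q.2 • h)‖ * ‖h‖ :=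
    ((hf'cont.comp (continuous_fst.add (continuous_snd.smul continuous_const))).norm).mul
      continuous_const
  have hpt : ∀ x, ENNReal.ofReal |u x - u (x + h)| ≤
      ∫⁻ t in Set.Ioc (0:ℝ) 1, ENNReal.ofReal (‖fderiv ℝ u (x + t • h)‖ * ‖h‖) := by
    intro x
    have hcont1 : Continuous fun t : ℝ => fderiv ℝ u (x + t • h) :=
      hf'cont.comp (continuous_const.add (continuous_id.smul continuous_const))
    have hcont2 : Continuous fun t : ℝ => (fderiv ℝ u (x + t • h)) h :=
      (ContinuousLinearMap.apply ℝ ℝ h).continuous.comp hcont1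
    have hderiv : ∀ t ∈ Set.uIcc (0:ℝ) 1,
        HasDerivAt (fun τ => u (x + τ • h)) ((fderiv ℝ u (x + t • h)) h) t := by
      intro t _
      have h1 : HasFDerivAt u (fderiv ℝ u (x + t • h)) (x + t • h) :=
        (hu.differentiable one_ne_zero _).hasFDerivAt
      have h2 : HasDerivAt (fun τ : ℝ => x + τ • h) h t := by
        simpa using ((hasDerivAt_id t).smul_const h).const_add x
      exact h1.comp_hasDerivAt t h2
    have heq : u (x + h) - u x = ∫ t in (0:ℝ)..1, (fderiv ℝ u (x + t • h)) h := by
      rw [intervalIntegral.integral_eq_sub_of_hasDerivAt hderiv (hcont2.intervalIntegrable 0 1)]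
      simp
    have hineq : |u x - u (x + h)| ≤ ∫ t in Set.Ioc (0:ℝ) 1, ‖fderiv ℝ u (x + t • h)‖ * ‖h‖ := by
      rw [abs_sub_comm, heq]
      calc |∫ t in (0:ℝ)..1, (fderiv ℝ u (x + t • h)) h|
          ≤ ∫ t in (0:ℝ)..1, |(fderiv ℝ u (x + t • h)) h| :=
            intervalIntegral.abs_integral_le_integral_abs zero_le_one
        _ ≤ ∫ t in (0:ℝ)..1, ‖fderiv ℝ u (x + t • h)‖ * ‖h‖ := by
            refine intervalIntegral.integral_mono_on zero_le_one
              (hcont2.abs.intervalIntegrable 0 1)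
              ((hcont1.norm.mul continuous_const).intervalIntegrable 0 1)
              fun t _ => ?_
            exact (fderiv ℝ u (x + t • h)).le_opNorm h
        _ = ∫ t in Set.Ioc (0:ℝ) 1, ‖fderiv ℝ u (x + t • h)‖ * ‖h‖ :=
            intervalIntegral.integral_of_le zero_le_one
    refine le_trans (ENNReal.ofReal_le_ofReal hineq) (le_of_eq ?_)
    exact ofReal_integral_eq_lintegral_ofReal
      ((hcont1.norm.mul continuous_const).integrableOn_Ioc)
      (ae_of_all _ fun t => by positivity)
  calc (∫⁻ x, ENNReal.ofReal |u x - u (x + h)|)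
      ≤ ∫⁻ x, ∫⁻ t in Set.Ioc (0:ℝ) 1, ENNReal.ofReal (‖fderiv ℝ u (x + t • h)‖ * ‖h‖) :=
        lintegral_mono hpt
    _ = ∫⁻ t in Set.Ioc (0:ℝ) 1, ∫⁻ x, ENNReal.ofReal (‖fderiv ℝ u (x + t • h)‖ * ‖h‖) :=
        lintegral_lintegral_swap (hcont3.measurable.ennreal_ofReal).aemeasurable
    _ = ∫⁻ _ in Set.Ioc (0:ℝ) 1,
          (ENNReal.ofReal ‖h‖ * ∫⁻ x, ENNReal.ofReal ‖fderiv ℝ u x‖) := by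
        refine setLIntegral_congr_fun measurableSet_Ioc (fun t _ => ?_)
        calc (∫⁻ x, ENNReal.ofReal (‖fderiv ℝ u (x + t • h)‖ * ‖h‖))
            = ∫⁻ x, ENNReal.ofReal (‖fderiv ℝ u x‖ * ‖h‖) :=
              lintegral_add_right_eq_self
                (fun z => ENNReal.ofReal (‖fderiv ℝ u z‖ * ‖h‖)) (t • h)
          _ = ENNReal.ofReal ‖h‖ * ∫⁻ x, ENNReal.ofReal ‖fderiv ℝ u x‖ := by
              rw [lintegral_congr fun x => ENNReal.ofReal_mul (norm_nonneg (fderiv ℝ u x)),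
                lintegral_mul_const' _ _ ENNReal.ofReal_ne_top, mul_comm]
    _ = ENNReal.ofReal ‖h‖ * ∫⁻ x, ENNReal.ofReal ‖fderiv ℝ u x‖ := by
        rw [setLIntegral_const, Real.volume_Ioc]
        simp

theorem gagliardo_additive_estimate {N : ℕ} (s : ℝ) (hs : s ∈ Set.Ioo (0 : ℝ) 1)
    (u : EuclideanSpace ℝ (Fin N) → ℝ) (hu : ContDiff ℝ 1 u)
    (hcs : HasCompactSupport u) :
    ∫⁻ x, ∫⁻ y, ENNReal.ofReal (|u x - u y| / ‖x - y‖ ^ ((N : ℝ) + s)) ≤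
      ENNReal.ofReal ((N : ℝ) *
        (volume (Metric.ball (0 : EuclideanSpace ℝ (Fin N)) 1)).toReal *
        ((1 / (1 - s)) * (∫ x, ‖fderiv ℝ u x‖) + (2 / s) * ∫ x, |u x|)) := by
  obtain ⟨hs0, hs1⟩ := hs
  rcases Nat.eq_zero_or_pos N with hN | hN
  · subst hN
    refine le_trans (le_of_eq ?_) zero_le
    have hz : ∀ x y : EuclideanSpace ℝ (Fin 0),
        ENNReal.ofReal (|u x - u y| / ‖x - y‖ ^ (((0:ℕ) : ℝ) + s)) = 0 := fun x y => by
      rw [Subsingleton.elim x y]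
      simp
    calc (∫⁻ x, ∫⁻ y : EuclideanSpace ℝ (Fin 0),
            ENNReal.ofReal (|u x - u y| / ‖x - y‖ ^ (((0:ℕ) : ℝ) + s)))
        = ∫⁻ _ : EuclideanSpace ℝ (Fin 0), (0:ℝ≥0∞) :=
          lintegral_congr fun x => by simp only [hz]; exact lintegral_zero
      _ = 0 := lintegral_zero
  -- main case
  haveI : Nonempty (Fin N) := ⟨⟨0, hN⟩⟩
  have hdimE : Module.finrank ℝ (EuclideanSpace ℝ (Fin N)) = N := finrank_euclideanSpace_fin
  have hucont : Continuous u := hu.continuous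
  have hf'cont : Continuous (fderiv ℝ u) := hu.continuous_fderiv one_ne_zero
  have hDi : Integrable (fun x => ‖fderiv ℝ u x‖) :=
    hf'cont.norm.integrable_of_hasCompactSupport (hcs.fderiv ℝ).norm
  have hUi : Integrable (fun x => |u x|) :=
    hucont.abs.integrable_of_hasCompactSupport hcs.abs
  have hD0 : (0:ℝ) ≤ ∫ x, ‖fderiv ℝ u x‖ := integral_nonneg fun x => norm_nonneg _
  have hU0 : (0:ℝ) ≤ ∫ x, |u x| := integral_nonneg fun x => abs_nonneg _
  have hDval : (∫⁻ x, ENNReal.ofReal ‖fderiv ℝ u x‖) =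
      ENNReal.ofReal (∫ x, ‖fderiv ℝ u x‖) :=
    (ofReal_integral_eq_lintegral_ofReal hDi (ae_of_all _ fun x => norm_nonneg _)).symm
  have hUval : (∫⁻ x, ENNReal.ofReal |u x|) = ENNReal.ofReal (∫ x, |u x|) :=
    (ofReal_integral_eq_lintegral_ofReal hUi (ae_of_all _ fun x => abs_nonneg _)).symm
  set p : ℝ := (N : ℝ) + s with hp
  set J : EuclideanSpace ℝ (Fin N) → ℝ≥0∞ :=
    fun h => ∫⁻ x, ENNReal.ofReal (|u x - u (x + h)| / ‖h‖ ^ p) with hJ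
  -- Step 1: translation + Tonelli
  have hstep1 : (∫⁻ x, ∫⁻ y, ENNReal.ofReal (|u x - u y| / ‖x - y‖ ^ p)) = ∫⁻ h, J h := by
    have h1 : ∀ x : EuclideanSpace ℝ (Fin N),
        (∫⁻ y, ENNReal.ofReal (|u x - u y| / ‖x - y‖ ^ p)) =
        ∫⁻ h, ENNReal.ofReal (|u x - u (x + h)| / ‖h‖ ^ p) := fun x => by
      rw [← lintegral_add_left_eq_self
        (fun y => ENNReal.ofReal (|u x - u y| / ‖x - y‖ ^ p)) x]
      exact lintegral_congr fun h => by rw [sub_add_cancel_left, norm_neg]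
    rw [lintegral_congr h1]
    exact lintegral_lintegral_swap
      ((((hucont.measurable.comp measurable_fst).sub
          (hucont.measurable.comp (measurable_fst.add measurable_snd))).abs.div
        ((measurable_rpow_const' p).comp measurable_snd.norm)).ennreal_ofReal).aemeasurable
  -- rewriting J for h ≠ 0
  have hJrw : ∀ h : EuclideanSpace ℝ (Fin N), h ≠ 0 →
      J h = (∫⁻ x, ENNReal.ofReal |u x - u (x + h)|) * (ENNReal.ofReal (‖h‖ ^ p))⁻¹ := by
    intro h hh
    have hnorm : (0:ℝ) < ‖h‖ := norm_pos_iff.mpr hh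
    have hc : (0:ℝ) < ‖h‖ ^ p := Real.rpow_pos_of_pos hnorm p
    have hx : ∀ x : EuclideanSpace ℝ (Fin N),
        ENNReal.ofReal (|u x - u (x + h)| / ‖h‖ ^ p) =
        ENNReal.ofReal |u x - u (x + h)| * (ENNReal.ofReal (‖h‖ ^ p))⁻¹ := fun x => by
      rw [div_eq_mul_inv, ENNReal.ofReal_mul (abs_nonneg _), ENNReal.ofReal_inv_of_pos hc]
    calc J h = ∫⁻ x, ENNReal.ofReal |u x - u (x + h)| * (ENNReal.ofReal (‖h‖ ^ p))⁻¹ :=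
          lintegral_congr hx
      _ = (∫⁻ x, ENNReal.ofReal |u x - u (x + h)|) * (ENNReal.ofReal (‖h‖ ^ p))⁻¹ :=
          lintegral_mul_const' _ _ (ENNReal.inv_ne_top.mpr (ENNReal.ofReal_pos.mpr hc).ne')
  have hinv : ∀ h : EuclideanSpace ℝ (Fin N), h ≠ 0 →
      (ENNReal.ofReal (‖h‖ ^ p))⁻¹ = ENNReal.ofReal (‖h‖ ^ (-p)) := fun h hh => by
    have hnorm : (0:ℝ) < ‖h‖ := norm_pos_iff.mpr hh
    rw [Real.rpow_neg hnorm.le, ENNReal.ofReal_inv_of_pos (Real.rpow_pos_of_pos hnorm p)]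
  -- radial integrals
  have hA := lintegral_ball_rpow (volume : Measure (EuclideanSpace ℝ (Fin N))) hs0 hs1
  have hB := lintegral_compl_ball_rpow (volume : Measure (EuclideanSpace ℝ (Fin N))) hs0
  rw [hdimE] at hA hB
  -- near part
  have hnear : (∫⁻ h in ball (0 : EuclideanSpace ℝ (Fin N)) 1, J h) ≤
      ENNReal.ofReal (∫ x, ‖fderiv ℝ u x‖) *
        ((N : ℝ≥0∞) * volume (ball (0 : EuclideanSpace ℝ (Fin N)) 1) *
          ENNReal.ofReal (1 / (1 - s))) := by
    have h0 : ∀ᵐ h : EuclideanSpace ℝ (Fin N) ∂volume, h ≠ 0 := by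
      have hset : {h : EuclideanSpace ℝ (Fin N) | ¬ h ≠ 0} = {0} := by ext; simp
      rw [ae_iff, hset]
      exact measure_singleton 0
    have hae : ∀ᵐ h ∂(volume.restrict (ball (0 : EuclideanSpace ℝ (Fin N)) 1)),
        J h ≤ ENNReal.ofReal (∫ x, ‖fderiv ℝ u x‖) * ENNReal.ofReal (‖h‖ ^ (1 - p)) := by
      refine ae_restrict_of_ae (h0.mono fun h hh => ?_)
      have hnorm : (0:ℝ) < ‖h‖ := norm_pos_iff.mpr hh
      rw [hJrw h hh]
      calc (∫⁻ x, ENNReal.ofReal |u x - u (x + h)|) * (ENNReal.ofReal (‖h‖ ^ p))⁻¹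
          ≤ (ENNReal.ofReal ‖h‖ * ∫⁻ x, ENNReal.ofReal ‖fderiv ℝ u x‖) *
              (ENNReal.ofReal (‖h‖ ^ p))⁻¹ := mul_le_mul_left (K1_bound u hu h) _
        _ = ENNReal.ofReal (∫ x, ‖fderiv ℝ u x‖) * ENNReal.ofReal (‖h‖ ^ (1 - p)) := by
            rw [hDval, hinv h hh, mul_comm (ENNReal.ofReal ‖h‖), mul_assoc,
              ← ENNReal.ofReal_mul (norm_nonneg h),
              show ‖h‖ * ‖h‖ ^ (-p) = ‖h‖ ^ (1 - p) by
                rw [show (1:ℝ) - p = 1 + -p by ring, Real.rpow_add hnorm, Real.rpow_one]]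
    calc (∫⁻ h in ball (0 : EuclideanSpace ℝ (Fin N)) 1, J h)
        ≤ ∫⁻ h in ball (0 : EuclideanSpace ℝ (Fin N)) 1,
            ENNReal.ofReal (∫ x, ‖fderiv ℝ u x‖) * ENNReal.ofReal (‖h‖ ^ (1 - p)) :=
          lintegral_mono_ae hae
      _ = ENNReal.ofReal (∫ x, ‖fderiv ℝ u x‖) *
            ∫⁻ h in ball (0 : EuclideanSpace ℝ (Fin N)) 1, ENNReal.ofReal (‖h‖ ^ (1 - p)) :=
          lintegral_const_mul' _ _ ENNReal.ofReal_ne_top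
      _ = _ := by rw [hp] at *; rw [hA]
  -- far part
  have hfar : (∫⁻ h in (ball (0 : EuclideanSpace ℝ (Fin N)) 1)ᶜ, J h) ≤
      (2 * ENNReal.ofReal (∫ x, |u x|)) *
        ((N : ℝ≥0∞) * volume (ball (0 : EuclideanSpace ℝ (Fin N)) 1) *
          ENNReal.ofReal (1 / s)) := by
    have hae : ∀ᵐ h ∂(volume.restrict ((ball (0 : EuclideanSpace ℝ (Fin N)) 1)ᶜ)),
        J h ≤ (2 * ENNReal.ofReal (∫ x, |u x|)) * ENNReal.ofReal (‖h‖ ^ (-p)) := by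
      refine (ae_restrict_mem measurableSet_ball.compl).mono fun h hh => ?_
      have h1 : (1:ℝ) ≤ ‖h‖ := by
        simpa [mem_ball_zero_iff, not_lt] using hh
      have hh0 : h ≠ 0 := by
        intro h0
        rw [h0] at h1
        simp at h1
        linarith
      rw [hJrw h hh0, hinv h hh0]
      exact mul_le_mul_left (by rw [← hUval]; exact K2_bound u hucont h) _
    calc (∫⁻ h in (ball (0 : EuclideanSpace ℝ (Fin N)) 1)ᶜ, J h)
        ≤ ∫⁻ h in (ball (0 : EuclideanSpace ℝ (Fin N)) 1)ᶜ,
            (2 * ENNReal.ofReal (∫ x, |u x|)) * ENNReal.ofReal (‖h‖ ^ (-p)) :=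
          lintegral_mono_ae hae
      _ = (2 * ENNReal.ofReal (∫ x, |u x|)) *
            ∫⁻ h in (ball (0 : EuclideanSpace ℝ (Fin N)) 1)ᶜ, ENNReal.ofReal (‖h‖ ^ (-p)) :=
          lintegral_const_mul' _ _
            (ENNReal.mul_ne_top (by norm_num) ENNReal.ofReal_ne_top)
      _ = _ := by rw [hp] at *; rw [hB]
  -- combine
  have hω : ((N : ℕ) : ℝ≥0∞) * volume (ball (0 : EuclideanSpace ℝ (Fin N)) 1) =
      ENNReal.ofReal ((N : ℝ) * (volume (ball (0 : EuclideanSpace ℝ (Fin N)) 1)).toReal) := by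
    rw [ENNReal.ofReal_mul (Nat.cast_nonneg N), ENNReal.ofReal_toReal measure_ball_lt_top.ne,
      ENNReal.ofReal_natCast]
  have h1s : (0:ℝ) ≤ 1 / (1 - s) := by
    have : (0:ℝ) < 1 - s := by linarith
    positivity
  have h1s' : (0:ℝ) ≤ 1 / s := by positivity
  have hω0 : (0:ℝ) ≤ (N : ℝ) * (volume (ball (0 : EuclideanSpace ℝ (Fin N)) 1)).toReal := by
    positivity
  calc (∫⁻ x, ∫⁻ y, ENNReal.ofReal (|u x - u y| / ‖x - y‖ ^ p))
      = ∫⁻ h, J h := hstep1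
    _ = (∫⁻ h in ball (0 : EuclideanSpace ℝ (Fin N)) 1, J h) +
          ∫⁻ h in (ball (0 : EuclideanSpace ℝ (Fin N)) 1)ᶜ, J h :=
        (lintegral_add_compl _ measurableSet_ball).symm
    _ ≤ ENNReal.ofReal (∫ x, ‖fderiv ℝ u x‖) *
          ((N : ℝ≥0∞) * volume (ball (0 : EuclideanSpace ℝ (Fin N)) 1) *
            ENNReal.ofReal (1 / (1 - s))) +
        (2 * ENNReal.ofReal (∫ x, |u x|)) *
          ((N : ℝ≥0∞) * volume (ball (0 : EuclideanSpace ℝ (Fin N)) 1) *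
            ENNReal.ofReal (1 / s)) := add_le_add hnear hfar
    _ = ENNReal.ofReal ((N : ℝ) *
          (volume (Metric.ball (0 : EuclideanSpace ℝ (Fin N)) 1)).toReal *
          ((1 / (1 - s)) * (∫ x, ‖fderiv ℝ u x‖) + (2 / s) * ∫ x, |u x|)) := by
        rw [hω]
        rw [show (2:ℝ≥0∞) * ENNReal.ofReal (∫ x, |u x|) =
            ENNReal.ofReal (2 * ∫ x, |u x|) from by
          rw [ENNReal.ofReal_mul (by norm_num : (0:ℝ) ≤ 2), ENNReal.ofReal_ofNat]]
        rw [← ENNReal.ofReal_mul hω0, ← ENNReal.ofReal_mul hD0,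
          ← ENNReal.ofReal_mul hω0,
          ← ENNReal.ofReal_mul (mul_nonneg (by norm_num : (0:ℝ) ≤ 2) hU0),
          ← ENNReal.ofReal_add (mul_nonneg hD0 (mul_nonneg hω0 h1s))
            (mul_nonneg (mul_nonneg (by norm_num : (0:ℝ) ≤ 2) hU0) (mul_nonneg hω0 h1s'))]
        congr 1
        ring
end

section
/- In dimension N = 1, for every s ∈ (0,1) the interpolation inequality [u]_{W^{s,1}(ℝ)} ≤ (2^{1-s}·2/((1-s)s)) |u'|(ℝ)^s ‖u‖_{L^1(ℝ)}^{1-s} holds with equality when u = 1_I is the characteristic function of a bounded interval I. -/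
open MeasureTheory

private lemma sub_left_lint (x : ℝ) (S : Set ℝ) (g : ℝ → ENNReal) :
    ∫⁻ y in S, g (x - y) = ∫⁻ t in (fun y => x - y) '' S, g t :=
  (Measure.measurePreserving_sub_left volume x).setLIntegral_comp_emb
    (MeasurableEquiv.subLeft x).measurableEmbedding g S

private lemma sub_right_lint (x : ℝ) (S : Set ℝ) (g : ℝ → ENNReal) :
    ∫⁻ y in S, g (y - x) = ∫⁻ t in (fun y => y - x) '' S, g t :=
  (measurePreserving_sub_right volume x).setLIntegral_comp_emb
    (MeasurableEquiv.subRight x).measurableEmbedding g S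

private lemma lint_Ici_rpow {s : ℝ} (hs0 : 0 < s) {c : ℝ} (hc : 0 < c) :
    ∫⁻ t in Set.Ici c, ENNReal.ofReal (t ^ (-(1 + s))) = ENNReal.ofReal (c ^ (-s) / s) := by
  rw [setLIntegral_congr (Ioi_ae_eq_Ici (a := c)).symm]
  rw [← ofReal_integral_eq_lintegral_ofReal
      (integrableOn_Ioi_rpow_of_lt (by linarith) hc)
      ((ae_restrict_mem measurableSet_Ioi).mono fun t ht =>
        Real.rpow_nonneg (le_of_lt (hc.trans ht)) _)]
  rw [integral_Ioi_rpow_of_lt (by linarith) hc]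
  congr 1
  have h1 : -(1 + s) + 1 = -s := by ring
  rw [h1, neg_div_neg_eq]

private lemma lint_Ioo_rpow {s : ℝ} (hs0 : 0 < s) (hs1 : s < 1) {L : ℝ} (hL : 0 < L) :
    ∫⁻ t in Set.Ioo 0 L, ENNReal.ofReal (t ^ (-s) / s)
      = ENNReal.ofReal (L ^ (1 - s) / ((1 - s) * s)) := by
  have hint : IntegrableOn (fun t : ℝ => t ^ (-s)) (Set.Ioo 0 L) :=
    (intervalIntegrable_iff_integrableOn_Ioo_of_le hL.le).mp
      (intervalIntegral.intervalIntegrable_rpow' (by linarith))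
  rw [← ofReal_integral_eq_lintegral_ofReal (hint.div_const s)
      ((ae_restrict_mem measurableSet_Ioo).mono fun t ht =>
        div_nonneg (Real.rpow_nonneg ht.1.le _) hs0.le)]
  congr 1
  rw [integral_div, ← MeasureTheory.integral_Ioc_eq_integral_Ioo,
    ← intervalIntegral.integral_of_le hL.le, integral_rpow (Or.inl (by linarith)),
    Real.zero_rpow (by intro hcon; linarith : -s + 1 ≠ 0)]
  have h1 : -s + 1 = 1 - s := by ring
  rw [h1, sub_zero, div_div]

private lemma inner_out {s a b : ℝ} (hs0 : 0 < s) {x : ℝ} (hx : x ∈ Set.Ioo a b) :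
    ∫⁻ y in (Set.Ioo a b)ᶜ, ENNReal.ofReal (|x - y| ^ (-(1 + s)))
      = ENNReal.ofReal ((x - a) ^ (-s) / s) + ENNReal.ofReal ((b - x) ^ (-s) / s) := by
  have hcompl : (Set.Ioo a b)ᶜ = Set.Iic a ∪ Set.Ici b := by
    rw [← Set.Ioi_inter_Iio, Set.compl_inter, Set.compl_Ioi, Set.compl_Iio]
  have hdisj : Disjoint (Set.Iic a) (Set.Ici b) := by
    rw [Set.disjoint_left]
    intro y hy hy'
    have : y ≤ a := hy
    have : b ≤ y := hy'
    linarith [hx.1, hx.2]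
  rw [hcompl, lintegral_union measurableSet_Ici hdisj]
  have p1 : ∫⁻ y in Set.Iic a, ENNReal.ofReal (|x - y| ^ (-(1 + s)))
      = ENNReal.ofReal ((x - a) ^ (-s) / s) := by
    rw [setLIntegral_congr_fun measurableSet_Iic
      (fun y (hy : y ≤ a) => by
        rw [abs_of_pos (by linarith [hx.1] : (0:ℝ) < x - y)])]
    rw [sub_left_lint x (Set.Iic a) (fun t => ENNReal.ofReal (t ^ (-(1 + s)))),
      Set.image_const_sub_Iic]
    exact lint_Ici_rpow hs0 (by linarith [hx.1])
  have p2 : ∫⁻ y in Set.Ici b, ENNReal.ofReal (|x - y| ^ (-(1 + s)))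
      = ENNReal.ofReal ((b - x) ^ (-s) / s) := by
    rw [setLIntegral_congr_fun measurableSet_Ici
      (fun y (hy : b ≤ y) => by
        rw [abs_sub_comm, abs_of_pos (by linarith [hx.2] : (0:ℝ) < y - x)])]
    rw [sub_right_lint x (Set.Ici b) (fun t => ENNReal.ofReal (t ^ (-(1 + s)))),
      Set.image_sub_const_Ici]
    exact lint_Ici_rpow hs0 (by linarith [hx.2])
  rw [p1, p2]

private lemma outer_int {s a b : ℝ} (hs0 : 0 < s) (hs1 : s < 1) (hab : a < b) :
    ∫⁻ x in Set.Ioo a b,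
        (ENNReal.ofReal ((x - a) ^ (-s) / s) + ENNReal.ofReal ((b - x) ^ (-s) / s))
      = ENNReal.ofReal (2 * (b - a) ^ (1 - s) / ((1 - s) * s)) := by
  have hL : 0 < b - a := sub_pos.mpr hab
  rw [lintegral_add_left (by fun_prop)]
  have q1 : ∫⁻ x in Set.Ioo a b, ENNReal.ofReal ((x - a) ^ (-s) / s)
      = ENNReal.ofReal ((b - a) ^ (1 - s) / ((1 - s) * s)) := by
    rw [sub_right_lint a (Set.Ioo a b) (fun t => ENNReal.ofReal (t ^ (-s) / s)),
      Set.image_sub_const_Ioo, sub_self]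
    exact lint_Ioo_rpow hs0 hs1 hL
  have q2 : ∫⁻ x in Set.Ioo a b, ENNReal.ofReal ((b - x) ^ (-s) / s)
      = ENNReal.ofReal ((b - a) ^ (1 - s) / ((1 - s) * s)) := by
    rw [sub_left_lint b (Set.Ioo a b) (fun t => ENNReal.ofReal (t ^ (-s) / s)),
      Set.image_const_sub_Ioo, sub_self]
    exact lint_Ioo_rpow hs0 hs1 hL
  rw [q1, q2, ← ENNReal.ofReal_add
    (div_nonneg (Real.rpow_nonneg hL.le _) (by nlinarith))
    (div_nonneg (Real.rpow_nonneg hL.le _) (by nlinarith))]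
  congr 1
  ring

theorem interpolation_equality_interval (s : ℝ) (hs : s ∈ Set.Ioo (0 : ℝ) 1)
    (a b : ℝ) (hab : a < b) :
    ∫⁻ x, ∫⁻ y,
        ENNReal.ofReal (|(Set.Ioo a b).indicator (fun _ => (1 : ℝ)) x -
          (Set.Ioo a b).indicator (fun _ => (1 : ℝ)) y| / |x - y| ^ (1 + s)) =
      ENNReal.ofReal ((2 : ℝ) ^ (1 - s) * 2 / ((1 - s) * s) *
        (2 : ℝ) ^ s * (b - a) ^ (1 - s)) := by
  obtain ⟨hs0, hs1⟩ := hs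
  have hL : 0 < b - a := sub_pos.mpr hab
  set h : ℝ → ℝ → ENNReal := fun x y => ENNReal.ofReal (|x - y| ^ (-(1 + s))) with hh
  have habs : ∀ x y : ℝ, (1:ℝ) / |x - y| ^ (1 + s) = |x - y| ^ (-(1 + s)) := fun x y => by
    rw [Real.rpow_neg (abs_nonneg _), one_div]
  have hFin : ∀ x ∈ Set.Ioo a b,
      (fun y => ENNReal.ofReal (|(Set.Ioo a b).indicator (fun _ => (1 : ℝ)) x -
          (Set.Ioo a b).indicator (fun _ => (1 : ℝ)) y| / |x - y| ^ (1 + s)))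
        = (Set.Ioo a b)ᶜ.indicator (h x) := by
    intro x hx
    funext y
    by_cases hy : y ∈ Set.Ioo a b
    · rw [Set.indicator_of_mem hx, Set.indicator_of_mem hy,
        Set.indicator_of_notMem (by simpa using hy)]
      simp
    · rw [Set.indicator_of_mem hx, Set.indicator_of_notMem hy,
        Set.indicator_of_mem (Set.mem_compl hy)]
      rw [sub_zero, abs_one, habs]
  have hFout : ∀ x ∈ (Set.Ioo a b)ᶜ,
      (fun y => ENNReal.ofReal (|(Set.Ioo a b).indicator (fun _ => (1 : ℝ)) x -
          (Set.Ioo a b).indicator (fun _ => (1 : ℝ)) y| / |x - y| ^ (1 + s)))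
        = (Set.Ioo a b).indicator (h x) := by
    intro x hx
    funext y
    by_cases hy : y ∈ Set.Ioo a b
    · rw [Set.indicator_of_notMem (Set.notMem_of_mem_compl hx), Set.indicator_of_mem hy,
        Set.indicator_of_mem hy]
      rw [zero_sub, abs_neg, abs_one, habs]
    · rw [Set.indicator_of_notMem (Set.notMem_of_mem_compl hx), Set.indicator_of_notMem hy,
        Set.indicator_of_notMem hy]
      simp
  rw [← lintegral_add_compl (fun x => ∫⁻ y,
        ENNReal.ofReal (|(Set.Ioo a b).indicator (fun _ => (1 : ℝ)) x -
          (Set.Ioo a b).indicator (fun _ => (1 : ℝ)) y| / |x - y| ^ (1 + s)))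
      measurableSet_Ioo]
  have e1 : ∫⁻ x in Set.Ioo a b, ∫⁻ y,
        ENNReal.ofReal (|(Set.Ioo a b).indicator (fun _ => (1 : ℝ)) x -
          (Set.Ioo a b).indicator (fun _ => (1 : ℝ)) y| / |x - y| ^ (1 + s))
      = ∫⁻ x in Set.Ioo a b, ∫⁻ y in (Set.Ioo a b)ᶜ, h x y :=
    setLIntegral_congr_fun measurableSet_Ioo (fun x hx => by
      rw [hFin x hx, lintegral_indicator measurableSet_Ioo.compl])
  have e2 : ∫⁻ x in (Set.Ioo a b)ᶜ, ∫⁻ y,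
        ENNReal.ofReal (|(Set.Ioo a b).indicator (fun _ => (1 : ℝ)) x -
          (Set.Ioo a b).indicator (fun _ => (1 : ℝ)) y| / |x - y| ^ (1 + s))
      = ∫⁻ x in (Set.Ioo a b)ᶜ, ∫⁻ y in Set.Ioo a b, h x y :=
    setLIntegral_congr_fun measurableSet_Ioo.compl (fun x hx => by
      rw [hFout x hx, lintegral_indicator measurableSet_Ioo])
  have hswap : ∫⁻ x in (Set.Ioo a b)ᶜ, ∫⁻ y in Set.Ioo a b, h x y
      = ∫⁻ x in Set.Ioo a b, ∫⁻ y in (Set.Ioo a b)ᶜ, h x y := by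
    rw [lintegral_lintegral_swap]
    · exact lintegral_congr fun y => lintegral_congr fun x => by
        simp only [hh]; rw [abs_sub_comm]
    · exact (Measurable.aemeasurable (by fun_prop))
  have e3 : ∫⁻ x in Set.Ioo a b, ∫⁻ y in (Set.Ioo a b)ᶜ, h x y
      = ENNReal.ofReal (2 * (b - a) ^ (1 - s) / ((1 - s) * s)) := by
    rw [setLIntegral_congr_fun measurableSet_Ioo
      (fun x hx => inner_out hs0 hx)]
    exact outer_int hs0 hs1 hab
  have hnn : 0 ≤ 2 * (b - a) ^ (1 - s) / ((1 - s) * s) :=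
    div_nonneg (mul_nonneg (by norm_num) (Real.rpow_nonneg hL.le _)) (by nlinarith)
  rw [e1, e2, hswap, e3, ← ENNReal.ofReal_add hnn hnn]
  congr 1
  have h2 : (2:ℝ) ^ (1 - s) * (2:ℝ) ^ s = 2 := by
    rw [← Real.rpow_add two_pos]; norm_num
  have hrw : (2:ℝ) ^ (1 - s) * 2 / ((1 - s) * s) * (2:ℝ) ^ s * (b - a) ^ (1 - s)
      = ((2:ℝ) ^ (1 - s) * (2:ℝ) ^ s) * (2 * (b - a) ^ (1 - s) / ((1 - s) * s)) := by
    ring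
  rw [hrw, h2]
  ring
end

section
/- Let Ω ⊂ ℝ^N be open and bounded, s ∈ (0,1), and define the s-Cheeger constant h_s(Ω) = inf{P_s(E)/|E| : E ⊂ Ω Borel, |E| > 0}. Then for every measurable u with ∫∫ |u(x)-u(y)|/|x-y|^{N+s} dx dy < ∞ and u = 0 a.e. outside Ω, u nonzero in L^1(Ω), one has [u]_{W^{s,1}(ℝ^N)} / ‖u‖_{L^1(Ω)} ≥ h_s(Ω). -/
open MeasureTheory ENNReal Set

/-- The fractional `s`-perimeter of a set `E ⊆ ℝ^N`. -/
noncomputable def sPerimeter {N : ℕ} (s : ℝ) (E : Set (EuclideanSpace ℝ (Fin N))) : ℝ≥0∞ :=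
  ∫⁻ x, ∫⁻ y,
    ENNReal.ofReal (|E.indicator (fun _ => (1 : ℝ)) x - E.indicator (fun _ => (1 : ℝ)) y| /
      ‖x - y‖ ^ ((N : ℝ) + s))

/-- The `s`-Cheeger constant of `Ω`. -/
noncomputable def sCheeger {N : ℕ} (s : ℝ) (Ω : Set (EuclideanSpace ℝ (Fin N))) : ℝ≥0∞ :=
  ⨅ E ∈ {E : Set (EuclideanSpace ℝ (Fin N)) | E ⊆ Ω ∧ MeasurableSet E ∧ 0 < volume E},
    sPerimeter s E / volume E

private lemma layer_le {a b : ℝ} (ha : 0 ≤ a) (hab : a ≤ b) :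
    ∫⁻ t in Set.Ioi (0:ℝ),
      ENNReal.ofReal |(if t < a then (1:ℝ) else 0) - (if t < b then (1:ℝ) else 0)| =
      ENNReal.ofReal (b - a) := by
  have h1 : ∀ t : ℝ, ENNReal.ofReal |(if t < a then (1:ℝ) else 0) - (if t < b then (1:ℝ) else 0)|
      = (Set.Ico a b).indicator (fun _ => (1:ℝ≥0∞)) t := by
    intro t
    by_cases htb : t < b
    · by_cases hta : t < a
      · simp [hta, htb, Set.indicator_apply, Set.mem_Ico, not_le.mpr hta]
      · simp [hta, htb, Set.indicator_apply, Set.mem_Ico, not_lt.mp hta]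
    · have hta : ¬ t < a := fun h => htb (h.trans_le hab)
      simp [hta, htb, Set.indicator_apply, Set.mem_Ico]
  simp_rw [h1]
  rw [lintegral_indicator measurableSet_Ico, Measure.restrict_restrict measurableSet_Ico,
    setLIntegral_one]
  apply le_antisymm
  · exact (measure_mono Set.inter_subset_left).trans_eq Real.volume_Ico
  · calc ENNReal.ofReal (b - a) = volume (Set.Ioo a b) := Real.volume_Ioo.symm
      _ ≤ _ := measure_mono (Set.subset_inter Set.Ioo_subset_Ico_self
          (Set.Ioo_subset_Ioi_self.trans (Set.Ioi_subset_Ioi ha)))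

private lemma layer (a b : ℝ) (ha : 0 ≤ a) (hb : 0 ≤ b) :
    ∫⁻ t in Set.Ioi (0:ℝ),
      ENNReal.ofReal |(if t < a then (1:ℝ) else 0) - (if t < b then (1:ℝ) else 0)| =
      ENNReal.ofReal |a - b| := by
  rcases le_total a b with h | h
  · rw [abs_sub_comm, abs_of_nonneg (sub_nonneg.mpr h)]; exact layer_le ha h
  · rw [abs_of_nonneg (sub_nonneg.mpr h), ← layer_le hb h]
    apply lintegral_congr
    intro t
    rw [abs_sub_comm]

private noncomputable def Ind {N : ℕ} (Ω : Set (EuclideanSpace ℝ (Fin N)))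
    (u : EuclideanSpace ℝ (Fin N) → ℝ) : ℝ × EuclideanSpace ℝ (Fin N) → ℝ :=
  ({p : ℝ × EuclideanSpace ℝ (Fin N) | p.1 < |u p.2| ∧ p.2 ∈ Ω}).indicator (fun _ => (1:ℝ))

private lemma ind_meas {N : ℕ} {Ω : Set (EuclideanSpace ℝ (Fin N))}
    {u : EuclideanSpace ℝ (Fin N) → ℝ} (hΩ : MeasurableSet Ω) (hm : Measurable u) :
    Measurable (Ind Ω u) := by
  apply measurable_const.indicator
  exact (measurableSet_lt measurable_fst (hm.abs.comp measurable_snd)).inter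
    (measurable_snd hΩ)

/-- The triple kernel. -/
private noncomputable def Fker {N : ℕ} (s : ℝ) (Ω : Set (EuclideanSpace ℝ (Fin N)))
    (u : EuclideanSpace ℝ (Fin N) → ℝ) (t : ℝ) (x y : EuclideanSpace ℝ (Fin N)) : ℝ≥0∞ :=
  ENNReal.ofReal (|Ind Ω u (t, x) - Ind Ω u (t, y)| / ‖x - y‖ ^ ((N : ℝ) + s))

private lemma F_meas {N : ℕ} {s : ℝ} (hNs : (0:ℝ) ≤ (N : ℝ) + s)
    {Ω : Set (EuclideanSpace ℝ (Fin N))}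
    {u : EuclideanSpace ℝ (Fin N) → ℝ} (hΩ : MeasurableSet Ω) (hm : Measurable u) :
    Measurable fun p : (ℝ × EuclideanSpace ℝ (Fin N)) × EuclideanSpace ℝ (Fin N) =>
      Fker s Ω u p.1.1 p.1.2 p.2 := by
  have h1 : Measurable fun p : (ℝ × EuclideanSpace ℝ (Fin N)) × EuclideanSpace ℝ (Fin N) =>
      Ind Ω u (p.1.1, p.1.2) := (ind_meas hΩ hm).comp
        (measurable_fst.fst.prodMk measurable_fst.snd)
  have h2 : Measurable fun p : (ℝ × EuclideanSpace ℝ (Fin N)) × EuclideanSpace ℝ (Fin N) =>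
      Ind Ω u (p.1.1, p.2) := (ind_meas hΩ hm).comp (measurable_fst.fst.prodMk measurable_snd)
  have h3 : Measurable fun p : (ℝ × EuclideanSpace ℝ (Fin N)) × EuclideanSpace ℝ (Fin N) =>
      |Ind Ω u (p.1.1, p.1.2) - Ind Ω u (p.1.1, p.2)| := (h1.sub h2).abs
  have h0 : Measurable fun p : (ℝ × EuclideanSpace ℝ (Fin N)) × EuclideanSpace ℝ (Fin N) =>
      ‖p.1.2 - p.2‖ := (measurable_fst.snd.sub measurable_snd).norm
  have h4 : Measurable fun p : (ℝ × EuclideanSpace ℝ (Fin N)) × EuclideanSpace ℝ (Fin N) =>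
      ‖p.1.2 - p.2‖ ^ ((N : ℝ) + s) := (Real.continuous_rpow_const hNs).measurable.comp h0
  exact ENNReal.measurable_ofReal.comp (h3.div h4)

private lemma F_meas2 {N : ℕ} {s : ℝ} (hNs : (0:ℝ) ≤ (N : ℝ) + s)
    {Ω : Set (EuclideanSpace ℝ (Fin N))}
    {u : EuclideanSpace ℝ (Fin N) → ℝ} (hΩ : MeasurableSet Ω) (hm : Measurable u)
    (x : EuclideanSpace ℝ (Fin N)) :
    Measurable fun p : ℝ × EuclideanSpace ℝ (Fin N) => Fker s Ω u p.1 x p.2 := by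
  have h1 : Measurable fun p : ℝ × EuclideanSpace ℝ (Fin N) =>
      Ind Ω u (p.1, x) := (ind_meas hΩ hm).comp (measurable_fst.prodMk measurable_const)
  have h2 : Measurable fun p : ℝ × EuclideanSpace ℝ (Fin N) =>
      Ind Ω u (p.1, p.2) := (ind_meas hΩ hm).comp (measurable_fst.prodMk measurable_snd)
  have h3 : Measurable fun p : ℝ × EuclideanSpace ℝ (Fin N) =>
      |Ind Ω u (p.1, x) - Ind Ω u (p.1, p.2)| := (h1.sub h2).abs
  have h0 : Measurable fun p : ℝ × EuclideanSpace ℝ (Fin N) =>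
      ‖x - p.2‖ := (measurable_const.sub measurable_snd).norm
  have h4 : Measurable fun p : ℝ × EuclideanSpace ℝ (Fin N) =>
      ‖x - p.2‖ ^ ((N : ℝ) + s) := (Real.continuous_rpow_const hNs).measurable.comp h0
  exact ENNReal.measurable_ofReal.comp (h3.div h4)

theorem gagliardo_ratio_ge_cheeger {N : ℕ} (s : ℝ) (hs : s ∈ Set.Ioo (0 : ℝ) 1)
    (Ω : Set (EuclideanSpace ℝ (Fin N))) (hΩo : IsOpen Ω) (hΩb : Bornology.IsBounded Ω)
    (u : EuclideanSpace ℝ (Fin N) → ℝ) (hm : Measurable u)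
    (hfin : (∫⁻ x, ∫⁻ y, ENNReal.ofReal (|u x - u y| / ‖x - y‖ ^ ((N : ℝ) + s))) ≠ ⊤)
    (hzero : ∀ᵐ x ∂volume, x ∉ Ω → u x = 0)
    (hne : (∫⁻ x in Ω, ENNReal.ofReal |u x|) ≠ 0) :
    (∫⁻ x, ∫⁻ y, ENNReal.ofReal (|u x - u y| / ‖x - y‖ ^ ((N : ℝ) + s))) /
        (∫⁻ x in Ω, ENNReal.ofReal |u x|) ≥ sCheeger s Ω := by
  have hNs : (0:ℝ) ≤ (N : ℝ) + s := add_nonneg (Nat.cast_nonneg N) hs.1.le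
  set E : ℝ → Set (EuclideanSpace ℝ (Fin N)) := fun t => {a | t < |u a|} ∩ Ω with hE
  have hlt : ∀ t : ℝ, MeasurableSet {a : EuclideanSpace ℝ (Fin N) | t < |u a|} :=
    fun t => measurableSet_lt measurable_const hm.abs
  have hmE : ∀ t, MeasurableSet (E t) := fun t => (hlt t).inter hΩo.measurableSet
  have hIeq : ∀ (t : ℝ) (x : EuclideanSpace ℝ (Fin N)),
      (E t).indicator (fun _ => (1:ℝ)) x = Ind Ω u (t, x) := by
    intro t x
    unfold Ind
    by_cases h : t < |u x| ∧ x ∈ Ω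
    · rw [Set.indicator_of_mem
          (show x ∈ {a | t < |u a|} ∩ Ω from ⟨h.1, h.2⟩) (fun _ => (1:ℝ)),
        Set.indicator_of_mem
          (show (t, x) ∈ {p : ℝ × EuclideanSpace ℝ (Fin N) | p.1 < |u p.2| ∧ p.2 ∈ Ω}
            from ⟨h.1, h.2⟩) (fun _ => (1:ℝ))]
    · rw [Set.indicator_of_notMem
          (show x ∉ {a | t < |u a|} ∩ Ω from fun hx => h ⟨hx.1, hx.2⟩) (fun _ => (1:ℝ)),
        Set.indicator_of_notMem
          (show (t, x) ∉ {p : ℝ × EuclideanSpace ℝ (Fin N) | p.1 < |u p.2| ∧ p.2 ∈ Ω}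
            from h) (fun _ => (1:ℝ))]
  have hper : ∀ t, sPerimeter s (E t) = ∫⁻ x, ∫⁻ y, Fker s Ω u t x y := by
    intro t
    unfold sPerimeter Fker
    simp_rw [hIeq]
  -- Cavalieri's principle
  have cav : (∫⁻ x in Ω, ENNReal.ofReal |u x|) = ∫⁻ t in Set.Ioi (0:ℝ), volume (E t) := by
    rw [lintegral_eq_lintegral_meas_lt (volume.restrict Ω)
      (ae_of_all _ fun x => abs_nonneg (u x)) hm.abs.aemeasurable]
    apply lintegral_congr
    intro t
    rw [Measure.restrict_apply (hlt t)]
  -- coarea inequality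
  have claim1 : ∫⁻ t in Set.Ioi (0:ℝ), ∫⁻ x, ∫⁻ y, Fker s Ω u t x y ≤
      ∫⁻ x, ∫⁻ y, ENNReal.ofReal (|u x - u y| / ‖x - y‖ ^ ((N : ℝ) + s)) := by
    have swap1 : ∫⁻ t in Set.Ioi (0:ℝ), ∫⁻ x, ∫⁻ y, Fker s Ω u t x y
        = ∫⁻ x, ∫⁻ t in Set.Ioi (0:ℝ), ∫⁻ y, Fker s Ω u t x y :=
      lintegral_lintegral_swap
        (Measurable.lintegral_prod_right
          (f := fun (p : ℝ × EuclideanSpace ℝ (Fin N)) y => Fker s Ω u p.1 p.2 y)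
          (F_meas hNs hΩo.measurableSet hm)).aemeasurable
    rw [swap1]
    have swap2 : ∀ x, ∫⁻ t in Set.Ioi (0:ℝ), ∫⁻ y, Fker s Ω u t x y
        = ∫⁻ y, ∫⁻ t in Set.Ioi (0:ℝ), Fker s Ω u t x y := fun x =>
      lintegral_lintegral_swap (F_meas2 hNs hΩo.measurableSet hm x).aemeasurable
    simp_rw [swap2]
    apply lintegral_mono_ae
    filter_upwards [hzero] with x hx
    apply lintegral_mono_ae
    filter_upwards [hzero] with y hy
    have hc0 : (0:ℝ) ≤ ‖x - y‖ ^ ((N : ℝ) + s) := Real.rpow_nonneg (norm_nonneg _) _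
    have hIx : ∀ t : ℝ, t ∈ Set.Ioi (0:ℝ) → ∀ z : EuclideanSpace ℝ (Fin N), (z ∉ Ω → u z = 0) →
        Ind Ω u (t, z) = if t < |u z| then (1:ℝ) else 0 := by
      intro t ht z hz
      unfold Ind
      by_cases hzo : z ∈ Ω
      · by_cases hlt' : t < |u z|
        · rw [Set.indicator_of_mem
            (show (t, z) ∈ {p : ℝ × EuclideanSpace ℝ (Fin N) | p.1 < |u p.2| ∧ p.2 ∈ Ω}
              from ⟨hlt', hzo⟩) (fun _ => (1:ℝ)), if_pos hlt']
        · rw [Set.indicator_of_notMem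
            (show (t, z) ∉ {p : ℝ × EuclideanSpace ℝ (Fin N) | p.1 < |u p.2| ∧ p.2 ∈ Ω}
              from fun hp => hlt' hp.1) (fun _ => (1:ℝ)), if_neg hlt']
      · have h0 : u z = 0 := hz hzo
        have hlt' : ¬ t < |u z| := by
          rw [h0, abs_zero]
          exact lt_asymm ht
        rw [Set.indicator_of_notMem
            (show (t, z) ∉ {p : ℝ × EuclideanSpace ℝ (Fin N) | p.1 < |u p.2| ∧ p.2 ∈ Ω}
              from fun hp => hzo hp.2) (fun _ => (1:ℝ)), if_neg hlt']
    calc ∫⁻ t in Set.Ioi (0:ℝ), Fker s Ω u t x y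
        = ∫⁻ t in Set.Ioi (0:ℝ),
            ENNReal.ofReal |(if t < |u x| then (1:ℝ) else 0) - (if t < |u y| then (1:ℝ) else 0)|
              * ENNReal.ofReal (‖x - y‖ ^ ((N : ℝ) + s))⁻¹ := by
          apply setLIntegral_congr_fun measurableSet_Ioi
          intro t ht
          unfold Fker
          beta_reduce
          rw [hIx t ht x hx, hIx t ht y hy, div_eq_mul_inv,
            ENNReal.ofReal_mul (abs_nonneg _)]
      _ = (∫⁻ t in Set.Ioi (0:ℝ),
            ENNReal.ofReal |(if t < |u x| then (1:ℝ) else 0) - (if t < |u y| then (1:ℝ) else 0)|)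
              * ENNReal.ofReal (‖x - y‖ ^ ((N : ℝ) + s))⁻¹ :=
          lintegral_mul_const' _ _ ENNReal.ofReal_ne_top
      _ = ENNReal.ofReal (|(|u x| - |u y|)|) * ENNReal.ofReal (‖x - y‖ ^ ((N : ℝ) + s))⁻¹ := by
          rw [layer _ _ (abs_nonneg _) (abs_nonneg _)]
      _ = ENNReal.ofReal (|(|u x| - |u y|)| * (‖x - y‖ ^ ((N : ℝ) + s))⁻¹) :=
          (ENNReal.ofReal_mul (abs_nonneg _)).symm
      _ ≤ ENNReal.ofReal (|u x - u y| * (‖x - y‖ ^ ((N : ℝ) + s))⁻¹) := ENNReal.ofReal_le_ofReal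
          (mul_le_mul_of_nonneg_right (abs_abs_sub_abs_le_abs_sub _ _) (inv_nonneg.mpr hc0))
      _ = ENNReal.ofReal (|u x - u y| / ‖x - y‖ ^ ((N : ℝ) + s)) := by rw [div_eq_mul_inv]
  -- per-level-set Cheeger bound
  have claim3 : ∀ t : ℝ, sCheeger s Ω * volume (E t) ≤ sPerimeter s (E t) := by
    intro t
    by_cases h0 : volume (E t) = 0
    · simp [h0]
    · have hvfin : volume (E t) ≠ ⊤ :=
        ((measure_mono Set.inter_subset_right).trans_lt hΩb.measure_lt_top).ne
      have hmem : E t ∈ {E : Set (EuclideanSpace ℝ (Fin N)) |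
          E ⊆ Ω ∧ MeasurableSet E ∧ 0 < volume E} :=
        ⟨Set.inter_subset_right, hmE t, zero_lt_iff.mpr h0⟩
      have hle : sCheeger s Ω ≤ sPerimeter s (E t) / volume (E t) := iInf₂_le (E t) hmem
      calc sCheeger s Ω * volume (E t)
          ≤ sPerimeter s (E t) / volume (E t) * volume (E t) := mul_le_mul_left hle _
        _ = sPerimeter s (E t) := ENNReal.div_mul_cancel h0 hvfin
  have hanti : Antitone fun t => volume (E t) := fun t t' htt' =>
    measure_mono (Set.inter_subset_inter_left _ fun a ha => lt_of_le_of_lt htt' ha)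
  rw [ge_iff_le, ENNReal.le_div_iff_mul_le (Or.inl hne) (Or.inr hfin)]
  calc sCheeger s Ω * ∫⁻ x in Ω, ENNReal.ofReal |u x|
      = sCheeger s Ω * ∫⁻ t in Set.Ioi (0:ℝ), volume (E t) := by rw [cav]
    _ = ∫⁻ t in Set.Ioi (0:ℝ), sCheeger s Ω * volume (E t) :=
        (lintegral_const_mul'' _ hanti.measurable.aemeasurable).symm
    _ ≤ ∫⁻ t in Set.Ioi (0:ℝ), sPerimeter s (E t) := lintegral_mono claim3
    _ = ∫⁻ t in Set.Ioi (0:ℝ), ∫⁻ x, ∫⁻ y, Fker s Ω u t x y := by simp_rw [hper]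
    _ ≤ _ := claim1
end
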